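/- arXiv:1012.5347 — 7 statements merged into one kernel-verified Lean document; each statement's English description precedes it below -/
import Mathlib

section
/- The symmetry group of the d-dimensional Sierpinski gasket (the group of isometries of ℝ^d mapping the gasket onto itself) is isomorphic to the symmetric group S_{d+1}, via the action on the d+1 vertices of the defining regular simplex. -/
open MeasureTheory Set Filter
noncomputable section

abbrev E (d : ℕ) := EuclideanSpace ℝ (Fin d)

variable {d : ℕ}

/-- The maps of the Sierpinski gasket IFS: `F p i x = (p i + x)/2`. -/
def F (p : Fin (d+1) → E d) (i : Fin (d+1)) (x : E d) : E d := midpoint ℝ (p i) x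

/-- `F_x = F_{i₁} ∘ ⋯ ∘ F_{iₙ}` for a word `x = i₁…iₙ`. -/
def Fword (p : Fin (d+1) → E d) (w : List (Fin (d+1))) : E d → E d :=
  w.foldr (fun i f => F p i ∘ f) id

/-- The cell `K_x = F_x(K)`. -/
def Kcell (p : Fin (d+1) → E d) (K : Set (E d)) (w : List (Fin (d+1))) : Set (E d) :=
  Fword p w '' K

/-- Edges of the augmented rooted tree (Sierpinski graph): vertical edges to the
parent (drop the last letter) and horizontal edges between distinct equal-length
words whose cells intersect. -/
def Edge (p : Fin (d+1) → E d) (K : Set (E d)) (x y : List (Fin (d+1))) : Prop :=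
  (x ≠ [] ∧ y = x.dropLast) ∨ (y ≠ [] ∧ x = y.dropLast) ∨
    (x ≠ y ∧ x.length = y.length ∧ (Kcell p K x ∩ Kcell p K y).Nonempty)

/-- The symmetry group of `K`: isometries of `ℝ^d` mapping `K` onto itself. -/
def symGroup (K : Set (E d)) : Subgroup (E d ≃ᵢ E d) where
  carrier := {g | g '' K = K}
  one_mem' := by simp
  mul_mem' := by
    intro a b ha hb
    simp only [Set.mem_setOf_eq] at *
    have h : ⇑(a * b) = ⇑a ∘ ⇑b := rfl
    rw [h, Set.image_comp, hb, ha]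
  inv_mem' := by
    intro a ha
    simp only [Set.mem_setOf_eq] at *
    conv_lhs => rw [← ha]
    rw [← Set.image_comp]
    simp

namespace SierpinskiAux

local notation "⟪" x ", " y "⟫" => @inner ℝ _ _ x y

lemma dist_F (p : Fin (d+1) → E d) (i : Fin (d+1)) (x y : E d) :
    dist (F p i x) (F p i y) = dist x y / 2 := by
  simp only [F, midpoint_eq_smul_add, invOf_eq_inv]
  rw [dist_eq_norm, dist_eq_norm, ← smul_sub]
  have h : (p i + x) - (p i + y) = x - y := by abel
  rw [h, norm_smul]
  simp [Real.norm_eq_abs]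
  ring

lemma F_fix (p : Fin (d+1) → E d) (i : Fin (d+1)) : F p i (p i) = p i := midpoint_self ℝ _

/-- If `A` is a compact nonempty set with `A ⊆ ⋃ F_i A` and `B` a closed nonempty set
with `F_i B ⊆ B` for all `i`, then `A ⊆ B`. -/
lemma attr_sub (p : Fin (d+1) → E d) {A B : Set (E d)}
    (hA : IsCompact A) (hAne : A.Nonempty)
    (hAself : ∀ x ∈ A, ∃ i, ∃ x' ∈ A, F p i x' = x)
    (hBc : IsClosed B) (hBne : B.Nonempty)
    (hFB : ∀ i, ∀ y ∈ B, F p i y ∈ B) : A ⊆ B := by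
  obtain ⟨x0, hx0, hmax⟩ := hA.exists_isMaxOn hAne (Metric.continuous_infDist_pt B).continuousOn
  have key : ∀ x ∈ A, Metric.infDist x B ≤ Metric.infDist x0 B / 2 := by
    intro x hx
    obtain ⟨i, x', hx', hFx⟩ := hAself x hx
    have h2 : Metric.infDist x B ≤ Metric.infDist x' B / 2 := by
      refine le_of_forall_pos_le_add ?_
      intro ε hε
      obtain ⟨y, hyB, hy⟩ := (Metric.infDist_lt_iff hBne).mp
        (lt_add_of_pos_right (Metric.infDist x' B) (by linarith : (0:ℝ) < 2*ε))
      calc Metric.infDist x B ≤ dist x (F p i y) := Metric.infDist_le_dist_of_mem (hFB i y hyB)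
        _ = dist x' y / 2 := by rw [← hFx, dist_F]
        _ ≤ (Metric.infDist x' B + 2*ε)/2 := by linarith
        _ = Metric.infDist x' B / 2 + ε := by ring
    have hle : Metric.infDist x' B ≤ Metric.infDist x0 B := hmax hx'
    exact h2.trans (by linarith)
  have h0 : Metric.infDist x0 B = 0 := by
    have h1 := key x0 hx0
    have h2 := Metric.infDist_nonneg (x := x0) (s := B)
    linarith
  intro x hx
  have h1 := key x hx
  rw [h0] at h1
  exact (hBc.mem_iff_infDist_zero hBne).mpr
    (le_antisymm (by linarith) Metric.infDist_nonneg)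

lemma F_mem (p : Fin (d+1) → E d) {K : Set (E d)} (hKself : K = ⋃ i, F p i '' K)
    (i : Fin (d+1)) {x : E d} (hx : x ∈ K) : F p i x ∈ K := by
  rw [hKself]
  exact Set.mem_iUnion.mpr ⟨i, Set.mem_image_of_mem _ hx⟩

lemma self_decomp (p : Fin (d+1) → E d) {K : Set (E d)} (hKself : K = ⋃ i, F p i '' K) :
    ∀ x ∈ K, ∃ i, ∃ x' ∈ K, F p i x' = x := by
  intro x hx
  rw [hKself] at hx
  obtain ⟨s, ⟨i, rfl⟩, ⟨x', hx', rfl⟩⟩ := hx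
  exact ⟨i, x', hx', rfl⟩

lemma p_mem (p : Fin (d+1) → E d) {K : Set (E d)} (hKc : IsCompact K) (hKne : K.Nonempty)
    (hKself : K = ⋃ i, F p i '' K) (i : Fin (d+1)) : p i ∈ K := by
  obtain ⟨x0, hx0⟩ := hKne
  set seq : ℕ → E d := fun n => (F p i)^[n] x0 with hseq
  have hseqK : ∀ n, seq n ∈ K := by
    intro n
    induction n with
    | zero => exact hx0
    | succ n ih =>
        have h1 : seq (n+1) = F p i (seq n) := Function.iterate_succ_apply' (F p i) n x0
        rw [h1]; exact F_mem p hKself i ih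
  have hdist : ∀ n, dist (seq n) (p i) = dist x0 (p i) * (2⁻¹:ℝ)^n := by
    intro n
    induction n with
    | zero => simp [hseq]
    | succ n ih =>
        have h1 : seq (n+1) = F p i (seq n) := Function.iterate_succ_apply' (F p i) n x0
        have h2 : dist (F p i (seq n)) (p i) = dist (seq n) (p i) / 2 := by
          conv_lhs => rw [← F_fix p i]
          rw [dist_F]
        rw [h1, h2, ih]; ring
  have htend : Tendsto seq atTop (nhds (p i)) := by
    rw [tendsto_iff_dist_tendsto_zero]
    have h3 : Tendsto (fun n : ℕ => dist x0 (p i) * (2⁻¹:ℝ)^n) atTop (nhds 0) := by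
      simpa using (tendsto_pow_atTop_nhds_zero_of_lt_one (by norm_num : (0:ℝ) ≤ 2⁻¹)
        (by norm_num : (2⁻¹:ℝ) < 1)).const_mul (dist x0 (p i))
    simpa [hdist] using h3
  exact hKc.isClosed.mem_of_tendsto htend (Filter.Eventually.of_forall hseqK)

lemma K_sub_hull (p : Fin (d+1) → E d) {K : Set (E d)} (hKc : IsCompact K) (hKne : K.Nonempty)
    (hKself : K = ⋃ i, F p i '' K) : K ⊆ convexHull ℝ (Set.range p) := by
  refine attr_sub p hKc hKne (self_decomp p hKself) ?_ ?_ ?_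
  · exact ((Set.finite_range p).isCompact_convexHull ℝ).isClosed
  · exact ⟨p 0, subset_convexHull ℝ _ ⟨0, rfl⟩⟩
  · intro i y hy
    have hpi : p i ∈ convexHull ℝ (Set.range p) := subset_convexHull ℝ _ ⟨i, rfl⟩
    exact (convex_convexHull ℝ (Set.range p)).segment_subset hpi hy
      (midpoint_mem_segment (p i) y)

lemma exists_weights (p : Fin (d+1) → E d) {x : E d}
    (hx : x ∈ convexHull ℝ (Set.range p)) :
    ∃ a : Fin (d+1) → ℝ, (∀ i, 0 ≤ a i) ∧ ∑ i, a i = 1 ∧ ∑ i, a i • p i = x := by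
  rw [convexHull_range_eq_exists_affineCombination] at hx
  obtain ⟨s, w, hw0, hw1, hx⟩ := hx
  refine ⟨fun i => if i ∈ s then w i else 0, fun i => ?_, ?_, ?_⟩
  · dsimp only
    split_ifs with h
    · exact hw0 i h
    · exact le_refl 0
  · simp only [Finset.sum_ite_mem, Finset.univ_inter]; exact hw1
  · rw [← hx, Finset.affineCombination_eq_linear_combination s p w hw1]
    simp only [ite_smul, zero_smul, Finset.sum_ite_mem, Finset.univ_inter]

lemma norm_pp (p : Fin (d+1) → E d) (hp : ∀ i j, i ≠ j → dist (p i) (p j) = 1)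
    {i j : Fin (d+1)} (h : i ≠ j) : ‖p i - p j‖ = 1 := by
  rw [← dist_eq_norm]; exact hp i j h

/-- A point of the simplex at distance one from another point of the simplex is a vertex. -/
lemma vertex_char (p : Fin (d+1) → E d) (hp : ∀ i j, i ≠ j → dist (p i) (p j) = 1)
    {x y : E d} (hx : x ∈ convexHull ℝ (Set.range p)) (hy : y ∈ convexHull ℝ (Set.range p))
    (hxy : dist x y = 1) : x ∈ Set.range p := by
  obtain ⟨a, ha0, ha1, hax⟩ := exists_weights p hx
  obtain ⟨b, hb0, hb1, hby⟩ := exists_weights p hy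
  set u : E d := x - y with hu
  have hun : ‖u‖ = 1 := by rw [hu, ← dist_eq_norm]; exact hxy
  have hrow : ∀ i, ∑ j, (a i * b j) • (p i - p j) = a i • p i - a i • y := by
    intro i
    have e1 : ∑ j, (a i * b j) • p i = a i • p i := by
      rw [← Finset.sum_smul, ← Finset.mul_sum, hb1, mul_one]
    have e2 : ∑ j, (a i * b j) • p j = a i • y := by
      rw [← hby, Finset.smul_sum]
      exact Finset.sum_congr rfl fun j _ => mul_smul (a i) (b j) (p j)
    calc ∑ j, (a i * b j) • (p i - p j)
        = ∑ j, ((a i * b j) • p i - (a i * b j) • p j) :=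
          Finset.sum_congr rfl fun j _ => smul_sub _ _ _
      _ = (∑ j, (a i * b j) • p i) - ∑ j, (a i * b j) • p j := Finset.sum_sub_distrib _ _
      _ = a i • p i - a i • y := by rw [e1, e2]
  have hsum : ∑ i, ∑ j, (a i * b j) • (p i - p j) = u := by
    calc ∑ i, ∑ j, (a i * b j) • (p i - p j) = ∑ i, (a i • p i - a i • y) :=
          Finset.sum_congr rfl fun i _ => hrow i
      _ = (∑ i, a i • p i) - (∑ i, a i) • y := by
          rw [Finset.sum_sub_distrib, Finset.sum_smul]
      _ = x - y := by rw [ha1, one_smul, hax]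
  have hinner : ∑ i, ∑ j, (a i * b j) * ⟪p i - p j, u⟫ = 1 := by
    have h1 : ⟪∑ i, ∑ j, (a i * b j) • (p i - p j), u⟫ = 1 := by
      rw [hsum, real_inner_self_eq_norm_sq, hun]; norm_num
    rw [← h1, sum_inner]
    refine Finset.sum_congr rfl fun i _ => ?_
    rw [sum_inner]
    exact Finset.sum_congr rfl fun j _ => (real_inner_smul_left _ _ _).symm
  have hwsum : ∑ i, ∑ j, a i * b j = 1 := by
    rw [← Finset.sum_mul_sum, ha1, hb1, mul_one]
  have hterm : ∀ i j : Fin (d+1), ⟪p i - p j, u⟫ ≤ 1 := by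
    intro i j
    rcases eq_or_ne i j with rfl | hij
    · simp
    · calc ⟪p i - p j, u⟫ ≤ ‖p i - p j‖ * ‖u‖ := real_inner_le_norm _ _
        _ = 1 := by rw [norm_pp p hp hij, hun, mul_one]
  have hTsum : ∑ q : Fin (d+1) × Fin (d+1),
      (a q.1 * b q.2) * (1 - ⟪p q.1 - p q.2, u⟫) = 0 := by
    rw [← Finset.univ_product_univ, Finset.sum_product]
    have : ∀ i : Fin (d+1), ∑ j, (a i * b j) * (1 - ⟪p i - p j, u⟫)
        = (∑ j, a i * b j) - ∑ j, (a i * b j) * ⟪p i - p j, u⟫ := by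
      intro i
      rw [← Finset.sum_sub_distrib]
      exact Finset.sum_congr rfl fun j _ => by ring
    rw [Finset.sum_congr rfl fun i _ => this i, Finset.sum_sub_distrib, hwsum, hinner, sub_self]
  have hTzero : ∀ q : Fin (d+1) × Fin (d+1),
      (a q.1 * b q.2) * (1 - ⟪p q.1 - p q.2, u⟫) = 0 := by
    intro q
    have := (Finset.sum_eq_zero_iff_of_nonneg (fun q _ => by
      exact mul_nonneg (mul_nonneg (ha0 q.1) (hb0 q.2))
        (sub_nonneg.mpr (hterm q.1 q.2)))).mp hTsum q (Finset.mem_univ q)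
    exact this
  have hkey : ∀ i j : Fin (d+1), a i * b j ≠ 0 → i ≠ j ∧ p i - p j = u := by
    intro i j hij
    have hz := hTzero (i, j)
    simp only at hz
    have hc : ⟪p i - p j, u⟫ = 1 := by
      rcases mul_eq_zero.mp hz with h | h
      · exact absurd h hij
      · linarith [sub_eq_zero.mp h]
    have hne : i ≠ j := by
      rintro rfl
      rw [sub_self, inner_zero_left] at hc
      norm_num at hc
    refine ⟨hne, ?_⟩
    have h1 : ⟪p i - p j, u⟫ = ‖p i - p j‖ * ‖u‖ := by
      rw [norm_pp p hp hne, hun, mul_one]; exact hc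
    have h2 := inner_eq_norm_mul_iff_real.mp h1
    rw [hun, norm_pp p hp hne, one_smul, one_smul] at h2
    exact h2
  obtain ⟨i0, _, hi0⟩ := Finset.exists_ne_zero_of_sum_ne_zero (by rw [ha1]; norm_num :
    ∑ i, a i ≠ 0)
  obtain ⟨j0, _, hj0⟩ := Finset.exists_ne_zero_of_sum_ne_zero (by rw [hb1]; norm_num :
    ∑ j, b j ≠ 0)
  have huniq : ∀ k, a k ≠ 0 → k = i0 := by
    intro k hk
    by_contra hki
    have h1 := hkey i0 j0 (mul_ne_zero hi0 hj0)
    have h2 := hkey k j0 (mul_ne_zero hk hj0)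
    have h3 : p i0 = p k := sub_left_inj.mp (h1.2.trans h2.2.symm)
    have h4 := hp k i0 hki
    rw [h3, dist_self] at h4
    norm_num at h4
  have ha_i0 : a i0 = 1 := by
    rw [← ha1]
    exact (Finset.sum_eq_single i0 (fun k _ hk => by
      by_contra hak
      exact hk (huniq k hak)) (fun h => absurd (Finset.mem_univ i0) h)).symm
  refine ⟨i0, ?_⟩
  rw [← hax]
  rw [Finset.sum_eq_single i0 (fun k _ hk => by
    have hak : a k = 0 := by by_contra hak; exact hk (huniq k hak)
    rw [hak, zero_smul]) (fun h => absurd (Finset.mem_univ i0) h)]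
  rw [ha_i0, one_smul]

lemma gram (p : Fin (d+1) → E d) (hp : ∀ i j, i ≠ j → dist (p i) (p j) = 1)
    {q : Fin (d+1) → Fin (d+1)} (hq : Function.Injective q) (i j : Fin d) :
    ⟪p (q i.succ) - p (q 0), p (q j.succ) - p (q 0)⟫ = if i = j then 1 else 1/2 := by
  have hne : ∀ k : Fin d, q k.succ ≠ q 0 := fun k h => Fin.succ_ne_zero k (hq h)
  rcases eq_or_ne i j with rfl | hij
  · rw [if_pos rfl, real_inner_self_eq_norm_sq, norm_pp p hp (hne i)]; norm_num
  · rw [if_neg hij]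
    have hA : ‖p (q i.succ) - p (q 0)‖ = 1 := norm_pp p hp (hne i)
    have hB : ‖p (q j.succ) - p (q 0)‖ = 1 := norm_pp p hp (hne j)
    have hAB : ‖(p (q i.succ) - p (q 0)) - (p (q j.succ) - p (q 0))‖ = 1 := by
      have h : (p (q i.succ) - p (q 0)) - (p (q j.succ) - p (q 0))
          = p (q i.succ) - p (q j.succ) := by abel
      rw [h]
      exact norm_pp p hp (fun h' => hij (Fin.succ_injective _ (hq h')))
    have hexp := norm_sub_sq_real (p (q i.succ) - p (q 0)) (p (q j.succ) - p (q 0))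
    rw [hA, hB, hAB] at hexp
    linarith [hexp]

lemma indep (p : Fin (d+1) → E d) (hp : ∀ i j, i ≠ j → dist (p i) (p j) = 1)
    {q : Fin (d+1) → Fin (d+1)} (hq : Function.Injective q) :
    LinearIndependent ℝ (fun i : Fin d => p (q i.succ) - p (q 0)) := by
  rw [Fintype.linearIndependent_iff]
  intro c hc i
  set v : Fin d → E d := fun i => p (q i.succ) - p (q 0) with hv
  set S := ∑ k, c k with hS
  have hj : ∀ j, c j / 2 + S / 2 = 0 := by
    intro j
    have h1 : ⟪∑ k, c k • v k, v j⟫ = 0 := by rw [hc, inner_zero_left]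
    rw [sum_inner] at h1
    have h2 : ∀ k, ⟪c k • v k, v j⟫ = c k * (if k = j then 1 else 1/2) := by
      intro k
      rw [real_inner_smul_left]
      congr 1
      exact gram p hp hq k j
    rw [Finset.sum_congr rfl (fun k _ => h2 k)] at h1
    have h3 : ∑ k, c k * (if k = j then 1 else 1/2)
        = c j / 2 + S / 2 := by
      have h4 : ∀ k, c k * (if k = j then 1 else 1/2)
          = (if k = j then c k / 2 else 0) + c k / 2 := by
        intro k; split_ifs <;> ring
      rw [Finset.sum_congr rfl (fun k _ => h4 k), Finset.sum_add_distrib,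
        Finset.sum_ite_eq' Finset.univ j (fun k => c k / 2), if_pos (Finset.mem_univ j),
        ← Finset.sum_div, ← hS]
    rw [h3] at h1
    exact h1
  have hSz : S = 0 := by
    have h4 : ∑ j : Fin d, (c j / 2 + S / 2) = 0 := Finset.sum_eq_zero fun j _ => hj j
    rw [Finset.sum_add_distrib, ← Finset.sum_div, ← hS, Finset.sum_const, Finset.card_univ,
      Fintype.card_fin, nsmul_eq_mul] at h4
    have h6 : ((d:ℝ) + 1) * S = 0 := by linear_combination 2 * h4
    rcases mul_eq_zero.mp h6 with h | h
    · have : (0:ℝ) ≤ (d:ℝ) := Nat.cast_nonneg d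
      linarith
    · exact h
  have := hj i
  rw [hSz] at this
  linarith

lemma fix_id (hd : 1 ≤ d) (p : Fin (d+1) → E d)
    (hp : ∀ i j, i ≠ j → dist (p i) (p j) = 1)
    (g : E d ≃ᵢ E d) (hfix : ∀ i, g (p i) = p i) (x : E d) : g x = x := by
  haveI : Nonempty (Fin d) := ⟨⟨0, hd⟩⟩
  have hvi : LinearIndependent ℝ (fun i : Fin d => p i.succ - p 0) := by
    simpa using indep p hp (q := id) Function.injective_id
  have hspan : Submodule.span ℝ (Set.range (fun i : Fin d => p i.succ - p 0)) = ⊤ :=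
    hvi.span_eq_top_of_card_eq_finrank (by simp [finrank_euclideanSpace_fin])
  have horth : ∀ i : Fin (d+1), ⟪p i - p 0, g x - x⟫ = 0 := by
    intro i
    have h1 : dist (g x) (p i) = dist x (p i) := by
      conv_lhs => rw [← hfix i]
      exact g.dist_eq x (p i)
    have h0 : dist (g x) (p 0) = dist x (p 0) := by
      conv_lhs => rw [← hfix 0]
      exact g.dist_eq x (p 0)
    have e1 : ‖g x - p i‖^2 = ‖x - p i‖^2 := by rw [← dist_eq_norm, ← dist_eq_norm, h1]
    have e0 : ‖g x - p 0‖^2 = ‖x - p 0‖^2 := by rw [← dist_eq_norm, ← dist_eq_norm, h0]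
    rw [norm_sub_sq_real, norm_sub_sq_real] at e1 e0
    simp only [inner_sub_left, inner_sub_right]
    rw [real_inner_comm (g x) (p i), real_inner_comm x (p i), real_inner_comm (g x) (p 0),
      real_inner_comm x (p 0)]
    linarith
  have hW : (⊤ : Submodule ℝ (E d)) ≤ (Submodule.span ℝ {g x - x})ᗮ := by
    rw [← hspan]
    refine Submodule.span_le.mpr ?_
    rintro u ⟨i, rfl⟩
    exact Submodule.mem_orthogonal_singleton_iff_inner_left.mpr (horth i.succ)
  have h1 := hW (Submodule.mem_top : g x - x ∈ (⊤ : Submodule ℝ (E d)))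
  rw [Submodule.mem_orthogonal_singleton_iff_inner_left] at h1
  have h2 : g x - x = 0 := by
    have := @inner_self_eq_zero ℝ (E d) _ _ _ (g x - x)
    exact this.mp h1
  exact sub_eq_zero.mp h2

lemma inner_sum_sum (c e : Fin d → ℝ) (f h : Fin d → E d) :
    ⟪∑ i, c i • f i, ∑ j, e j • h j⟫ = ∑ i, ∑ j, (c i * e j) * ⟪f i, h j⟫ := by
  rw [sum_inner]
  refine Finset.sum_congr rfl fun i _ => ?_
  rw [inner_sum]
  refine Finset.sum_congr rfl fun j _ => ?_
  rw [real_inner_smul_left, real_inner_smul_right]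
  ring

lemma perm_isometry (hd : 1 ≤ d) (p : Fin (d+1) → E d)
    (hp : ∀ i j, i ≠ j → dist (p i) (p j) = 1) (σ : Equiv.Perm (Fin (d+1))) :
    ∃ g : E d ≃ᵢ E d, ∀ i, g (p i) = p (σ i) := by
  haveI : Nonempty (Fin d) := ⟨⟨0, hd⟩⟩
  set v : Fin d → E d := fun i => p i.succ - p 0 with hv
  set w : Fin d → E d := fun i => p (σ i.succ) - p (σ 0) with hw
  have hvi : LinearIndependent ℝ v := by
    simpa using indep p hp (q := id) Function.injective_id
  have hspan : Submodule.span ℝ (Set.range v) = ⊤ :=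
    hvi.span_eq_top_of_card_eq_finrank (by simp [finrank_euclideanSpace_fin])
  set b : Module.Basis (Fin d) ℝ (E d) := Module.Basis.mk hvi hspan.ge with hb
  have hbv : ∀ i, b i = v i := fun i => by rw [hb, Module.Basis.mk_apply]
  set L : E d →ₗ[ℝ] E d := b.constr ℝ w with hL
  have hLb : ∀ i, L (v i) = w i := by
    intro i
    rw [← hbv i, hL]
    exact b.constr_basis ℝ w i
  have hgram : ∀ i j, ⟪w i, w j⟫ = ⟪v i, v j⟫ := by
    intro i j
    show ⟪p (σ i.succ) - p (σ 0), p (σ j.succ) - p (σ 0)⟫ = ⟪p i.succ - p 0, p j.succ - p 0⟫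
    rw [gram p hp σ.injective i j]
    have h2 := gram p hp (q := id) Function.injective_id i j
    simp only [id_eq] at h2
    rw [h2]
  have hrepr : ∀ x : E d, ∑ i, b.repr x i • v i = x := by
    intro x
    have := b.sum_repr x
    rw [Finset.sum_congr rfl fun i _ => by rw [hbv i]] at this
    exact this
  have hLx : ∀ x : E d, L x = ∑ i, b.repr x i • w i := by
    intro x
    conv_lhs => rw [← hrepr x]
    rw [map_sum]
    exact Finset.sum_congr rfl fun i _ => by rw [_root_.map_smul, hLb i]
  have hinner : ∀ x y : E d, ⟪L x, L y⟫ = ⟪x, y⟫ := by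
    intro x y
    calc ⟪L x, L y⟫ = ∑ i, ∑ j, (b.repr x i * b.repr y j) * ⟪w i, w j⟫ := by
          rw [hLx, hLx, inner_sum_sum]
      _ = ∑ i, ∑ j, (b.repr x i * b.repr y j) * ⟪v i, v j⟫ := by
          refine Finset.sum_congr rfl fun i _ => Finset.sum_congr rfl fun j _ => ?_
          rw [hgram i j]
      _ = ⟪x, y⟫ := by rw [← inner_sum_sum, hrepr, hrepr]
  have hnorm : ∀ x, ‖L x‖ = ‖x‖ := by
    intro x
    have h1 := hinner x x
    rw [real_inner_self_eq_norm_sq, real_inner_self_eq_norm_sq] at h1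
    calc ‖L x‖ = Real.sqrt (‖L x‖^2) := (Real.sqrt_sq (norm_nonneg _)).symm
      _ = Real.sqrt (‖x‖^2) := by rw [h1]
      _ = ‖x‖ := Real.sqrt_sq (norm_nonneg _)
  set Li : E d →ₗᵢ[ℝ] E d := ⟨L, hnorm⟩ with hLi
  set Leq := Li.toLinearIsometryEquiv rfl with hLeq
  set g : E d ≃ᵢ E d :=
    ((IsometryEquiv.addRight (-(p 0))).trans Leq.toIsometryEquiv).trans
      (IsometryEquiv.addLeft (p (σ 0))) with hg
  have hgx : ∀ x, g x = p (σ 0) + L (x + -(p 0)) := by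
    intro x
    rfl
  refine ⟨g, fun i => ?_⟩
  induction i using Fin.cases with
  | zero =>
      rw [hgx]
      simp
  | succ k =>
      rw [hgx]
      have h1 : p k.succ + -(p 0) = v k := (sub_eq_add_neg _ _).symm
      rw [h1, hLb k]
      show p (σ 0) + (p (σ k.succ) - p (σ 0)) = p (σ k.succ)
      abel

end SierpinskiAux

open SierpinskiAux in
/-- The symmetry group of the d-dimensional Sierpinski gasket is isomorphic to
the symmetric group on d+1 symbols, via the action on the simplex vertices. -/
theorem stmt0 (hd : 1 ≤ d) (p : Fin (d+1) → E d)
    (hp : ∀ i j, i ≠ j → dist (p i) (p j) = 1)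
    (K : Set (E d)) (hKc : IsCompact K) (hKne : K.Nonempty)
    (hKself : K = ⋃ i, F p i '' K) :
    ∃ φ : symGroup K →* Equiv.Perm (Fin (d+1)),
      Function.Bijective φ ∧
      ∀ g : symGroup K, ∀ i, (g : E d ≃ᵢ E d) (p i) = p (φ g i) := by
  classical
  have hKΔ := K_sub_hull p hKc hKne hKself
  have hpmem : ∀ i, p i ∈ K := p_mem p hKc hKne hKself
  have pinj : Function.Injective p := by
    intro i j hij
    by_contra hne
    have h := hp i j hne
    rw [hij, dist_self] at h
    norm_num at h
  have hV : ∀ g : symGroup K, ∀ i : Fin (d+1), ∃ j, (g : E d ≃ᵢ E d) (p i) = p j := by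
    intro g i
    have hgK : (g : E d ≃ᵢ E d) '' K = K := g.2
    have h1 : (g : E d ≃ᵢ E d) (p i) ∈ K := by
      have h := Set.mem_image_of_mem (g : E d ≃ᵢ E d) (hpmem i)
      rwa [hgK] at h
    have hexi : ∃ i' : Fin (d+1), i ≠ i' := by
      rcases eq_or_ne i 0 with rfl | h
      · refine ⟨⟨1, by omega⟩, ?_⟩
        intro h
        have := congrArg Fin.val h
        simp at this
      · exact ⟨0, h⟩
    obtain ⟨i', hii'⟩ := hexi
    have h2 : (g : E d ≃ᵢ E d) (p i') ∈ K := by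
      have h := Set.mem_image_of_mem (g : E d ≃ᵢ E d) (hpmem i')
      rwa [hgK] at h
    have h3 : dist ((g : E d ≃ᵢ E d) (p i)) ((g : E d ≃ᵢ E d) (p i')) = 1 := by
      rw [IsometryEquiv.dist_eq]; exact hp i i' hii'
    obtain ⟨j, hj⟩ := vertex_char p hp (hKΔ h1) (hKΔ h2) h3
    exact ⟨j, hj.symm⟩
  choose f hf using hV
  have hfinj : ∀ g : symGroup K, Function.Injective (f g) := by
    intro g i j hij
    apply pinj
    apply (g : E d ≃ᵢ E d).injective
    rw [hf g i, hf g j, hij]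
  have hfbij : ∀ g, Function.Bijective (f g) :=
    fun g => Finite.injective_iff_bijective.mp (hfinj g)
  let φ0 : symGroup K → Equiv.Perm (Fin (d+1)) := fun g => Equiv.ofBijective (f g) (hfbij g)
  have hφ0 : ∀ g i, φ0 g i = f g i := fun g i => rfl
  have hmul : ∀ g h : symGroup K, φ0 (g * h) = φ0 g * φ0 h := by
    intro g h
    apply Equiv.ext
    intro i
    apply pinj
    have h2 : ((g * h : symGroup K) : E d ≃ᵢ E d) (p i)
        = (g : E d ≃ᵢ E d) ((h : E d ≃ᵢ E d) (p i)) := rfl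
    rw [hφ0, ← hf (g * h) i, h2, hf h i, hf g (f h i)]
    rfl
  let φ : symGroup K →* Equiv.Perm (Fin (d+1)) := MonoidHom.mk' φ0 hmul
  refine ⟨φ, ⟨?_, ?_⟩, ?_⟩
  · rw [injective_iff_map_eq_one]
    intro g hg
    have hfix : ∀ i, (g : E d ≃ᵢ E d) (p i) = p i := by
      intro i
      rw [hf g i]
      have h1 : φ0 g i = i := by
        have := Equiv.ext_iff.mp (hg : φ0 g = 1) i
        exact this
      rw [← hφ0 g i, h1]
    exact Subtype.ext (IsometryEquiv.ext (fun x => fix_id hd p hp _ hfix x))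
  · intro σ
    obtain ⟨g, hgp⟩ := perm_isometry hd p hp σ
    have hcomm : ∀ i x, g (F p i x) = F p (σ i) (g x) := by
      intro i x
      have h := IsometryEquiv.map_midpoint g (p i) x
      rw [F, h, hgp i]
      rfl
    have himg : g '' K = ⋃ j, F p j '' (g '' K) := by
      conv_lhs => rw [hKself]
      rw [Set.image_iUnion]
      have h1 : ∀ i, g '' (F p i '' K) = F p (σ i) '' (g '' K) := by
        intro i
        rw [← Set.image_comp, ← Set.image_comp]
        exact Set.image_congr (fun x _ => hcomm i x)
      rw [Set.iUnion_congr h1]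
      exact σ.surjective.iUnion_comp (fun j => F p j '' (g '' K))
    have hgKc : IsCompact (g '' K) := hKc.image g.continuous
    have hgKne : (g '' K).Nonempty := hKne.image g
    have hsub1 : g '' K ⊆ K := attr_sub p hgKc hgKne (self_decomp p himg)
      hKc.isClosed hKne (fun i y hy => F_mem p hKself i hy)
    have hsub2 : K ⊆ g '' K := attr_sub p hKc hKne (self_decomp p hKself)
      hgKc.isClosed hgKne (fun i y hy => F_mem p himg i hy)
    have hgmem : g ∈ symGroup K := Set.Subset.antisymm hsub1 hsub2
    refine ⟨⟨g, hgmem⟩, ?_⟩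
    apply Equiv.ext
    intro i
    apply pinj
    have h4 : (φ ⟨g, hgmem⟩) i = f ⟨g, hgmem⟩ i := rfl
    rw [h4, ← hf ⟨g, hgmem⟩ i]
    exact hgp i
  · intro g i
    exact hf g i
end
end

section
/- The map sending each symmetry g of the Sierpinski gasket to the induced map g_X on words (defined by g_X(x) = y iff g(K_x) = K_y) is an injective group homomorphism from the symmetry group of K into the automorphism group of the Sierpinski graph (X,E); in particular, x ~ y in (X,E) if and only if g_X(x) ~ g_X(y). -/
open MeasureTheory Set Filter
noncomputable section

variable {d : ℕ}

open RealInnerProductSpace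


lemma F_dist (p : Fin (d+1) → E d) (i : Fin (d+1)) (a b : E d) :
    dist (F p i a) (F p i b) ≤ dist a b / 2 := by
  have := dist_midpoint_midpoint_le (p i) a (p i) b
  simpa [F] using this

lemma Fword_cons (p : Fin (d+1) → E d) (i : Fin (d+1)) (w : List (Fin (d+1))) :
    Fword p (i :: w) = F p i ∘ Fword p w := rfl

lemma Fword_dist (p : Fin (d+1) → E d) (w : List (Fin (d+1))) (a b : E d) :
    dist (Fword p w a) (Fword p w b) ≤ dist a b / 2 ^ w.length := by
  induction w with
  | nil => simp [Fword]
  | cons i w ih =>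
    rw [Fword_cons]
    calc dist (F p i (Fword p w a)) (F p i (Fword p w b))
        ≤ dist (Fword p w a) (Fword p w b) / 2 := F_dist ..
      _ ≤ dist a b / 2 ^ w.length / 2 := by linarith
      _ = dist a b / 2 ^ (i :: w).length := by
          rw [List.length_cons]; ring

lemma Kcell_cons (p : Fin (d+1) → E d) (K : Set (E d)) (i : Fin (d+1)) (w : List (Fin (d+1))) :
    Kcell p K (i :: w) = F p i '' Kcell p K w := by
  rw [Kcell, Kcell, Fword_cons, Set.image_comp]

section Main
variable (p : Fin (d+1) → E d) (K : Set (E d))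
  (hKc : IsCompact K) (hKne : K.Nonempty)
  (hKself : K = ⋃ i, F p i '' K)

include hKself in
lemma FK_subset (i : Fin (d+1)) : F p i '' K ⊆ K := by
  conv_rhs => rw [hKself]
  exact Set.subset_iUnion_of_subset i (le_refl _)

include hKc hKne hKself in
lemma p_mem (i : Fin (d+1)) : p i ∈ K := by
  obtain ⟨x₀, hx₀⟩ := hKne
  set a : ℕ → E d := fun n => (F p i)^[n] x₀ with ha
  have haK : ∀ n, a n ∈ K := by
    intro n
    induction n with
    | zero => simpa [ha] using hx₀
    | succ n ih =>
      have : a (n+1) = F p i (a n) := by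
        simp [ha, Function.iterate_succ_apply']
      rw [this]
      exact FK_subset p K hKself i ⟨a n, ih, rfl⟩
  have hfix : F p i (p i) = p i := by simp [F]
  have hbound : ∀ n, dist (a n) (p i) ≤ dist x₀ (p i) * (1/2) ^ n := by
    intro n
    induction n with
    | zero => simp [ha]
    | succ n ih =>
      have h1 : a (n+1) = F p i (a n) := by simp [ha, Function.iterate_succ_apply']
      have h2 : dist (F p i (a n)) (p i) ≤ dist (a n) (p i) / 2 := by
        conv_lhs => rw [← hfix]
        exact F_dist p i (a n) (p i)
      rw [h1]
      calc dist (F p i (a n)) (p i) ≤ dist (a n) (p i) / 2 := h2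
        _ ≤ dist x₀ (p i) * (1/2)^n / 2 := by linarith
        _ = dist x₀ (p i) * (1/2)^(n+1) := by ring
  have htend : Filter.Tendsto a Filter.atTop (nhds (p i)) := by
    rw [tendsto_iff_dist_tendsto_zero]
    apply squeeze_zero (fun n => dist_nonneg) hbound
    have : Filter.Tendsto (fun n : ℕ => (1/2 : ℝ) ^ n) Filter.atTop (nhds 0) :=
      tendsto_pow_atTop_nhds_zero_of_lt_one (by norm_num) (by norm_num)
    simpa using this.const_mul (dist x₀ (p i))
  exact hKc.isClosed.mem_of_tendsto htend (Filter.Eventually.of_forall haK)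

include hKself in
lemma exists_word : ∀ x ∈ K, ∀ n : ℕ, ∃ w : List (Fin (d+1)), w.length = n ∧ x ∈ Kcell p K w := by
  intro x hx n
  induction n generalizing x hx with
  | zero => exact ⟨[], rfl, by simpa [Kcell, Fword] using hx⟩
  | succ n ih =>
    have hx' : x ∈ ⋃ i, F p i '' K := hKself ▸ hx
    obtain ⟨i, y, hy, rfl⟩ := by simpa using hx'
    obtain ⟨w, hw, z, hz, hzy⟩ := ih y hy
    exact ⟨i :: w, by simp [hw], z, hz, by simp [Kcell, Fword_cons]; rw [hzy]⟩

lemma hull_invariant (c : E d) (hc : c ∈ convexHull ℝ (Set.range p)) (w : List (Fin (d+1))) :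
    Fword p w c ∈ convexHull ℝ (Set.range p) := by
  induction w with
  | nil => simpa [Fword] using hc
  | cons i w ih =>
    rw [Fword_cons]
    exact (convex_convexHull ℝ _).segment_subset
      (subset_convexHull ℝ _ (Set.mem_range_self i)) ih (midpoint_mem_segment ..)

include hKc hKne hKself in
lemma K_subset_hull : K ⊆ convexHull ℝ (Set.range p) := by
  intro x hx
  have hclosed : IsClosed (convexHull ℝ (Set.range p)) :=
    ((Set.finite_range p).isCompact_convexHull ℝ).isClosed
  rw [← hclosed.closure_eq]
  rw [Metric.mem_closure_iff]
  intro ε hε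
  set D := Metric.diam K with hD
  have htend : Filter.Tendsto (fun n : ℕ => D * (1/2 : ℝ) ^ n) Filter.atTop (nhds 0) := by
    have : Filter.Tendsto (fun n : ℕ => (1/2 : ℝ) ^ n) Filter.atTop (nhds 0) :=
      tendsto_pow_atTop_nhds_zero_of_lt_one (by norm_num) (by norm_num)
    simpa using this.const_mul D
  obtain ⟨n, hn⟩ := (htend.eventually (gt_mem_nhds hε)).exists
  obtain ⟨w, hwlen, y, hy, hxy⟩ := exists_word p K hKself x hx n
  refine ⟨Fword p w (p 0), hull_invariant p (p 0) (subset_convexHull ℝ _ (Set.mem_range_self 0)) w, ?_⟩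
  calc dist x (Fword p w (p 0)) = dist (Fword p w y) (Fword p w (p 0)) := by rw [hxy]
    _ ≤ dist y (p 0) / 2 ^ w.length := Fword_dist ..
    _ ≤ D * (1/2) ^ n := by
        rw [hwlen]
        have : dist y (p 0) ≤ D :=
          Metric.dist_le_diam_of_mem hKc.isBounded hy (p_mem p K hKc hKne hKself 0)
        have h2 : (0:ℝ) < 2 ^ n := by positivity
        rw [div_le_iff₀ h2] at *
        calc dist y (p 0) ≤ D := this
          _ = D * (1/2)^n * 2^n := by
              rw [mul_assoc, ← mul_pow]; norm_num
    _ < ε := hn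

end Main

section Vertex
variable (p : Fin (d+1) → E d) (hp : ∀ i j, i ≠ j → dist (p i) (p j) = 1)

include hp in
lemma dist_le_one {x : E d} (hx : x ∈ convexHull ℝ (Set.range p)) (j : Fin (d+1)) :
    dist x (p j) ≤ 1 := by
  obtain ⟨x', ⟨i, rfl⟩, h⟩ := convexHull_exists_dist_ge hx (p j)
  rcases eq_or_ne i j with h' | hij
  · rw [h'] at h
    have h0 : dist x (p j) ≤ 0 := by simpa using h
    have h1 : dist x (p j) = 0 := le_antisymm h0 dist_nonneg
    rw [h1]; norm_num
  · rw [hp i j hij] at h; exact h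

include hp in
lemma vertex_of_dist_one {x y : E d} (hx : x ∈ convexHull ℝ (Set.range p))
    (hy : y ∈ convexHull ℝ (Set.range p)) (hxy : dist x y = 1) : x ∈ Set.range p := by
  obtain ⟨ι, _, w, z, hw0, hw1, hz, hsum⟩ := mem_convexHull_iff_exists_fintype.mp hx
  have hnorm : ‖x - y‖ = 1 := by rw [← dist_eq_norm, hxy]
  have hzy : ∀ i, ‖z i - y‖ ≤ 1 := by
    intro i
    obtain ⟨j, hj⟩ := hz i
    rw [← hj, ← dist_eq_norm, dist_comm]
    exact dist_le_one p hp hy j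
  have hrepr : ∑ i, w i • (z i - y) = x - y := by
    simp_rw [smul_sub, Finset.sum_sub_distrib, ← Finset.sum_smul, hw1, hsum, one_smul]
  have hinner : ∑ i, w i * ⟪z i - y, x - y⟫ = 1 := by
    have h1 : ⟪x - y, x - y⟫ = 1 := by
      rw [real_inner_self_eq_norm_sq, hnorm]; norm_num
    have key : ⟪(∑ i, w i • (z i - y)), x - y⟫ = ∑ i, w i * ⟪z i - y, x - y⟫ := by
      rw [sum_inner]
      simp_rw [real_inner_smul_left]
    rw [hrepr] at key
    rw [← key, h1]
  have hle : ∀ i, ⟪z i - y, x - y⟫ ≤ 1 := by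
    intro i
    calc ⟪z i - y, x - y⟫ ≤ ‖z i - y‖ * ‖x - y‖ := real_inner_le_norm ..
      _ ≤ 1 * 1 := by
          apply mul_le_mul (hzy i) (le_of_eq hnorm) (norm_nonneg _) zero_le_one
      _ = 1 := by norm_num
  have hzero : ∑ i, w i * (1 - ⟪z i - y, x - y⟫) = 0 := by
    simp_rw [mul_sub, Finset.sum_sub_distrib, mul_one, hw1, hinner, sub_self]
  have hterm : ∀ i ∈ Finset.univ, w i * (1 - ⟪z i - y, x - y⟫) = 0 := by
    rw [← Finset.sum_eq_zero_iff_of_nonneg]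
    · exact hzero
    · intro i _
      exact mul_nonneg (hw0 i) (by linarith [hle i])
  obtain ⟨i, hi⟩ : ∃ i, w i ≠ 0 := by
    by_contra h
    push_neg at h
    rw [Finset.sum_eq_zero (fun i _ => h i)] at hw1
    norm_num at hw1
  have hci : ⟪z i - y, x - y⟫ = 1 := by
    have := hterm i (Finset.mem_univ i)
    rcases mul_eq_zero.mp this with h | h
    · exact absurd h hi
    · linarith
  have hdiff : ‖(z i - y) - (x - y)‖ ^ 2 ≤ 0 := by
    rw [norm_sub_sq_real, hci, hnorm]
    have h1 : ‖z i - y‖ ^ 2 ≤ 1 := by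
      nlinarith [hzy i, norm_nonneg (z i - y)]
    nlinarith
  have : z i - y = x - y := by
    have h0 : ‖(z i - y) - (x - y)‖ ^ 2 ≥ 0 := sq_nonneg _
    have : ‖(z i - y) - (x - y)‖ = 0 := by
      nlinarith [norm_nonneg ((z i - y) - (x - y))]
    rwa [norm_eq_zero, sub_eq_zero] at this
  have : z i = x := by
    have := sub_left_inj.mp this
    exact this
  rw [← this]
  exact hz i

include hp in
lemma p_injective : Function.Injective p := by
  intro i j h
  by_contra hij
  have := hp i j hij
  rw [h, dist_self] at this
  norm_num at this

include hp in
lemma span_top (hd : 1 ≤ d) :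
    Submodule.span ℝ (Set.range fun i : Fin d => p i.succ - p 0) = ⊤ := by
  set v : Fin d → E d := fun i => p i.succ - p 0 with hv
  have hnorm : ∀ i, ‖v i‖ = 1 := by
    intro i
    rw [hv, ← dist_eq_norm]
    exact hp _ _ (Fin.succ_ne_zero i)
  have hinner : ∀ i j, ⟪v i, v j⟫ = if i = j then 1 else 1/2 := by
    intro i j
    rcases eq_or_ne i j with rfl | hij
    · rw [if_pos rfl, real_inner_self_eq_norm_sq, hnorm]; norm_num
    · rw [if_neg hij]
      have hsub : ‖v i - v j‖ = 1 := by
        rw [hv]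
        simp only [sub_sub_sub_cancel_right]
        rw [← dist_eq_norm]
        exact hp _ _ (fun h => hij (Fin.succ_injective d h))
      have := norm_sub_sq_real (v i) (v j)
      rw [hsub, hnorm, hnorm] at this
      nlinarith
  have hli : LinearIndependent ℝ v := by
    rw [Fintype.linearIndependent_iff]
    intro c hc
    have hk : ∀ k, (∑ i, c i) / 2 + c k / 2 = 0 := by
      intro k
      have h0 : ⟪∑ i, c i • v i, v k⟫ = 0 := by rw [hc, inner_zero_left]
      rw [sum_inner] at h0
      simp_rw [real_inner_smul_left, hinner] at h0
      have : ∑ i, c i * (if i = k then (1:ℝ) else 1/2)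
          = (∑ i, c i) / 2 + c k / 2 := by
        have : ∀ i, c i * (if i = k then (1:ℝ) else 1/2)
            = c i * (1/2) + (if i = k then c i * (1/2) else 0) := by
          intro i
          rcases eq_or_ne i k with rfl | h
          · simp; ring
          · simp [h]
        rw [Finset.sum_congr rfl (fun i _ => this i)]
        rw [Finset.sum_add_distrib, Finset.sum_ite_eq' Finset.univ k]
        simp only [Finset.mem_univ, if_true]
        rw [← Finset.sum_mul]
        ring
      rw [this] at h0
      exact h0
    set s := ∑ i, c i with hs
    have hck : ∀ k, c k = -s := by
      intro k
      have := hk k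
      linarith
    have hssum : s = -(d * s) := by
      rw [hs]
      conv_lhs => rw [Finset.sum_congr rfl (fun k _ => hck k)]
      simp [Finset.sum_const, Finset.card_fin]
      exact Or.inl hs
    have hs0 : s = 0 := by
      have hd0 : (0:ℝ) ≤ d := Nat.cast_nonneg d
      nlinarith
    intro k
    rw [hck k, hs0, neg_zero]
  have hcard : Fintype.card (Fin d) = Module.finrank ℝ (E d) :=
    (Fintype.card_fin d).trans finrank_euclideanSpace_fin.symm
  haveI : Nonempty (Fin d) := Fin.pos_iff_nonempty.mp hd
  exact hli.span_eq_top_of_card_eq_finrank hcard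

include hp in
lemma rigid (hd : 1 ≤ d) (g : E d ≃ᵢ E d) (hg : ∀ i, g (p i) = p i) : ∀ x, g x = x := by
  intro x
  set y := g x with hy
  have hdist : ∀ j, dist y (p j) = dist x (p j) := by
    intro j
    calc dist y (p j) = dist (g x) (g (p j)) := by rw [hy, hg j]
      _ = dist x (p j) := g.dist_eq x (p j)
  have hperp : ∀ i : Fin d, ⟪p i.succ - p 0, y - x⟫ = 0 := by
    intro i
    have hA : ‖y - p i.succ‖ = ‖x - p i.succ‖ := by
      rw [← dist_eq_norm, ← dist_eq_norm]; exact hdist _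
    have hB : ‖y - p 0‖ = ‖x - p 0‖ := by
      rw [← dist_eq_norm, ← dist_eq_norm]; exact hdist _
    have eA := norm_sub_sq_real y (p i.succ)
    have eA' := norm_sub_sq_real x (p i.succ)
    have eB := norm_sub_sq_real y (p 0)
    have eB' := norm_sub_sq_real x (p 0)
    rw [hA] at eA
    rw [hB] at eB
    have expand : ⟪p i.succ - p 0, y - x⟫
        = ⟪y, p i.succ⟫ - ⟪y, p 0⟫ - ⟪x, p i.succ⟫ + ⟪x, p 0⟫ := by
      rw [inner_sub_left, inner_sub_right, inner_sub_right]
      rw [real_inner_comm (p i.succ) y, real_inner_comm (p 0) y,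
        real_inner_comm (p i.succ) x, real_inner_comm (p 0) x]
      ring
    rw [expand]
    linarith
  have hle : Submodule.span ℝ (Set.range fun i : Fin d => p i.succ - p 0) ≤
      LinearMap.ker ((innerSL ℝ (y - x) : E d →L[ℝ] ℝ) : E d →ₗ[ℝ] ℝ) := by
    rw [Submodule.span_le]
    rintro z ⟨i, rfl⟩
    simp only [SetLike.mem_coe, LinearMap.mem_ker, ContinuousLinearMap.coe_coe,
      innerSL_apply_apply]
    rw [real_inner_comm]
    exact hperp i
  have hmem : y - x ∈ LinearMap.ker ((innerSL ℝ (y - x) : E d →L[ℝ] ℝ) : E d →ₗ[ℝ] ℝ) := by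
    apply hle
    rw [span_top p hp hd]
    exact Submodule.mem_top
  have hzero : ⟪y - x, y - x⟫ = 0 := by
    rw [LinearMap.mem_ker] at hmem
    simpa only [ContinuousLinearMap.coe_coe, innerSL_apply_apply] using hmem
  have : y - x = 0 := inner_self_eq_zero.mp hzero
  rw [hy] at this ⊢
  exact sub_eq_zero.mp this

end Vertex

lemma symGroup_image {K : Set (E d)} (g : symGroup K) : (g : E d ≃ᵢ E d) '' K = K := g.2

section Sym

variable (hd : 1 ≤ d) (p : Fin (d+1) → E d)
  (hp : ∀ i j, i ≠ j → dist (p i) (p j) = 1)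
  {K : Set (E d)} (hKc : IsCompact K) (hKne : K.Nonempty)
  (hKself : K = ⋃ i, F p i '' K)

include hd hp hKc hKne hKself in
lemma exists_tau (g : symGroup K) (i : Fin (d+1)) :
    ∃ j, (g : E d ≃ᵢ E d) (p i) = p j := by
  have hpK : ∀ k, p k ∈ K := p_mem p K hKc hKne hKself
  have hgK : ∀ x, x ∈ K → (g : E d ≃ᵢ E d) x ∈ K := by
    intro x hx
    have hmem := Set.mem_image_of_mem (⇑(g : E d ≃ᵢ E d)) hx
    rwa [symGroup_image g] at hmem
  have hhull := K_subset_hull p K hKc hKne hKself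
  set i' : Fin (d+1) := if i = ⟨0, by omega⟩ then ⟨1, by omega⟩ else ⟨0, by omega⟩ with hi'
  have hne : i ≠ i' := by
    rw [hi']
    split_ifs with h
    · rw [h]; simp [Fin.ext_iff]
    · exact h
  have hdist : dist ((g : E d ≃ᵢ E d) (p i)) ((g : E d ≃ᵢ E d) (p i')) = 1 := by
    rw [(g : E d ≃ᵢ E d).dist_eq]
    exact hp i i' hne
  have := vertex_of_dist_one p hp (hhull (hgK _ (hpK i))) (hhull (hgK _ (hpK i'))) hdist
  obtain ⟨j, hj⟩ := this
  exact ⟨j, hj.symm⟩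

end Sym

/-- The induced map on letters. -/
def tau (p : Fin (d+1) → E d) {K : Set (E d)} (g : symGroup K) (i : Fin (d+1)) :
    Fin (d+1) :=
  @dite _ (∃ j, (g : E d ≃ᵢ E d) (p i) = p j) (Classical.propDecidable _)
    (fun h => h.choose) (fun _ => i)

section Sym2

variable (hd : 1 ≤ d) (p : Fin (d+1) → E d)
  (hp : ∀ i j, i ≠ j → dist (p i) (p j) = 1)
  {K : Set (E d)} (hKc : IsCompact K) (hKne : K.Nonempty)
  (hKself : K = ⋃ i, F p i '' K)

include hd hp hKc hKne hKself in
lemma tau_spec (g : symGroup K) (i : Fin (d+1)) :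
    (g : E d ≃ᵢ E d) (p i) = p (tau p g i) := by
  have h := exists_tau hd p hp hKc hKne hKself g i
  rw [tau]
  rw [dif_pos h]
  exact h.choose_spec

include hd hp hKc hKne hKself in
lemma tau_mul (g h : symGroup K) :
    tau p (g * h) = tau p g ∘ tau p h := by
  funext i
  apply p_injective p hp
  rw [← tau_spec hd p hp hKc hKne hKself (g * h) i]
  have h1 : ((g * h : symGroup K) : E d ≃ᵢ E d) (p i)
      = (g : E d ≃ᵢ E d) ((h : E d ≃ᵢ E d) (p i)) := rfl
  rw [h1, tau_spec hd p hp hKc hKne hKself h i, tau_spec hd p hp hKc hKne hKself g]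
  rfl

include hd hp hKc hKne hKself in
lemma tau_one : tau p (1 : symGroup K) = id := by
  funext i
  apply p_injective p hp
  rw [← tau_spec hd p hp hKc hKne hKself 1 i]
  rfl

include hd hp hKc hKne hKself in
lemma tau_inv_comp (g : symGroup K) : tau p g⁻¹ ∘ tau p g = id := by
  rw [← tau_mul hd p hp hKc hKne hKself g⁻¹ g, inv_mul_cancel,
    tau_one hd p hp hKc hKne hKself]

include hd hp hKc hKne hKself in
lemma tau_comp_inv (g : symGroup K) : tau p g ∘ tau p g⁻¹ = id := by
  rw [← tau_mul hd p hp hKc hKne hKself g g⁻¹, mul_inv_cancel,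
    tau_one hd p hp hKc hKne hKself]

include hd hp hKc hKne hKself in
lemma tau_inj (g : symGroup K) : Function.Injective (tau p g) := by
  intro i j hij
  have h1 := tau_spec hd p hp hKc hKne hKself g i
  have h2 := tau_spec hd p hp hKc hKne hKself g j
  rw [hij, ← h2] at h1
  exact p_injective p hp ((g : E d ≃ᵢ E d).injective h1)

include hd hp hKc hKne hKself in
lemma g_comp_F (g : symGroup K) (i : Fin (d+1)) :
    ⇑(g : E d ≃ᵢ E d) ∘ F p i = F p (tau p g i) ∘ ⇑(g : E d ≃ᵢ E d) := by
  funext x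
  show (g : E d ≃ᵢ E d) (midpoint ℝ (p i) x) = midpoint ℝ (p _) ((g : E d ≃ᵢ E d) x)
  rw [(g : E d ≃ᵢ E d).map_midpoint, tau_spec hd p hp hKc hKne hKself g i]

include hd hp hKc hKne hKself in
lemma cell_image (g : symGroup K) (w : List (Fin (d+1))) :
    (g : E d ≃ᵢ E d) '' Kcell p K w = Kcell p K (List.map (tau p g) w) := by
  induction w with
  | nil =>
    show (g : E d ≃ᵢ E d) '' Kcell p K [] = Kcell p K []
    have h0 : Kcell p K [] = K := by simp [Kcell, Fword]
    rw [h0, symGroup_image]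
  | cons i w ih =>
    rw [List.map_cons, Kcell_cons, Kcell_cons, ← Set.image_comp,
      g_comp_F hd p hp hKc hKne hKself g i, Set.image_comp, ih]

include hd hp hKc hKne hKself in
lemma edge_mono (g : symGroup K) (x y : List (Fin (d+1))) (h : Edge p K x y) :
    Edge p K (List.map (tau p g) x) (List.map (tau p g) y) := by
  rcases h with ⟨hx, hy⟩ | ⟨hy, hx⟩ | ⟨hxy, hlen, hne⟩
  · left
    refine ⟨by simpa using hx, ?_⟩
    rw [hy, List.map_dropLast]
  · right; left
    refine ⟨by simpa using hy, ?_⟩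
    rw [hx, List.map_dropLast]
  · right; right
    refine ⟨fun hc => hxy ((List.map_injective_iff.mpr
        (tau_inj hd p hp hKc hKne hKself g)) hc), by simp [hlen], ?_⟩
    rw [← cell_image hd p hp hKc hKne hKself g, ← cell_image hd p hp hKc hKne hKself g,
      ← Set.image_inter (g : E d ≃ᵢ E d).injective]
    exact hne.image _

end Sym2


/-- The map sending a symmetry of the gasket to the induced map on words is an
injective homomorphism into the automorphism group of the Sierpinski graph:
it preserves the edge relation in both directions. -/
theorem stmt5 (hd : 1 ≤ d) (p : Fin (d+1) → E d)
    (hp : ∀ i j, i ≠ j → dist (p i) (p j) = 1)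
    (K : Set (E d)) (hKc : IsCompact K) (hKne : K.Nonempty)
    (hKself : K = ⋃ i, F p i '' K) :
    ∃ Φ : symGroup K →* Equiv.Perm (List (Fin (d+1))),
      Function.Injective Φ ∧
      (∀ g : symGroup K, ∀ w, (g : E d ≃ᵢ E d) '' Kcell p K w = Kcell p K (Φ g w)) ∧
      (∀ g : symGroup K, ∀ x y, Edge p K x y ↔ Edge p K (Φ g x) (Φ g y)) := by
  set Φ₀ : symGroup K → Equiv.Perm (List (Fin (d+1))) := fun g =>
    { toFun := List.map (tau p g)
      invFun := List.map (tau p g⁻¹)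
      left_inv := fun l => by
        rw [List.map_map, tau_inv_comp hd p hp hKc hKne hKself g, List.map_id]
      right_inv := fun l => by
        rw [List.map_map, tau_comp_inv hd p hp hKc hKne hKself g, List.map_id] } with hΦ₀
  have hΦ₀app : ∀ g w, Φ₀ g w = List.map (tau p g) w := fun g w => rfl
  set Φ : symGroup K →* Equiv.Perm (List (Fin (d+1))) := MonoidHom.mk' Φ₀ (by
    intro g h
    ext w
    rw [Equiv.Perm.mul_apply, hΦ₀app, hΦ₀app, hΦ₀app,
      tau_mul hd p hp hKc hKne hKself g h, ← List.map_map]) with hΦ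
  have hΦapp : ∀ g w, Φ g w = List.map (tau p g) w := fun g w => rfl
  refine ⟨Φ, ?_, ?_, ?_⟩
  · rw [injective_iff_map_eq_one]
    intro g hg
    have htau : ∀ i, tau p g i = i := by
      intro i
      have := congrArg (fun e : Equiv.Perm (List (Fin (d+1))) => e [i]) hg
      simpa [hΦapp] using this
    have hfix : ∀ i, (g : E d ≃ᵢ E d) (p i) = p i := by
      intro i
      rw [tau_spec hd p hp hKc hKne hKself g i, htau i]
    have hfix' := rigid p hp hd (g : E d ≃ᵢ E d) hfix
    exact Subtype.ext (IsometryEquiv.ext hfix')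
  · intro g w
    rw [hΦapp]
    exact cell_image hd p hp hKc hKne hKself g w
  · intro g x y
    constructor
    · intro h
      rw [hΦapp, hΦapp]
      exact edge_mono hd p hp hKc hKne hKself g x y h
    · intro h
      have := edge_mono hd p hp hKc hKne hKself g⁻¹ _ _ h
      rw [hΦapp, hΦapp, List.map_map, List.map_map,
        tau_inv_comp hd p hp hKc hKne hKself g, List.map_id, List.map_id] at this
      exact this
end
end

section
/- Let λ be a Borel probability measure on the unit interval [0,1] satisfying (a) λ(B) = λ(1 - B) for every Borel set B, and (b) λ(2B) = λ(B ∪ (1-B)) for every Borel set B ⊂ [0, 1/2]. Then λ is the Lebesgue measure on [0,1]. -/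
open MeasureTheory Set

/-- A Borel probability measure on [0,1] satisfying the group invariance
identity λ(B) = λ(1-B) and the self-similar identity λ(2B) = λ(B ∪ (1-B)) for
B ⊆ [0,1/2] is the Lebesgue measure on [0,1]. -/
theorem stmt8 (μ : Measure ℝ) [IsProbabilityMeasure μ] (hsupp : μ (Set.Icc 0 1) = 1)
    (ha : ∀ B : Set ℝ, MeasurableSet B → μ ((fun x => 1 - x) '' B) = μ B)
    (hb : ∀ B : Set ℝ, MeasurableSet B → B ⊆ Set.Icc 0 (1/2) →
      μ ((fun x => 2 * x) '' B) = μ (B ∪ (fun x => 1 - x) '' B)) :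
    μ = volume.restrict (Set.Icc 0 1) := by
  -- everything outside [0,1] is null
  have hout : μ (Set.Icc (0:ℝ) 1)ᶜ = 0 := by
    have := measure_compl (measurableSet_Icc : MeasurableSet (Icc (0:ℝ) 1)) (measure_ne_top μ _)
    rw [this, hsupp, measure_univ, tsub_self]
  have hnull : ∀ s : Set ℝ, s ∩ Icc (0:ℝ) 1 = ∅ → μ s = 0 := by
    intro s hs
    refine le_antisymm ?_ zero_le
    rw [← hout]
    refine measure_mono (fun x hx hmem => ?_)
    have : x ∈ s ∩ Icc (0:ℝ) 1 := ⟨hx, hmem⟩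
    simp [hs] at this
  -- symmetry on singletons
  have hsingle : ∀ x : ℝ, μ {1 - x} = μ {x} := by
    intro x
    have := ha {x} (measurableSet_singleton x)
    simpa using this
  -- μ {1} = 0
  have h1 : μ ({1} : Set ℝ) = 0 := by
    have h := hb {0} (measurableSet_singleton 0) (by norm_num)
    have him : (fun x : ℝ => 2 * x) '' {0} = {0} := by simp
    have him2 : (fun x : ℝ => 1 - x) '' {0} = {1} := by simp
    rw [him, him2, measure_union (by simp) (measurableSet_singleton 1)] at h
    have h' : μ ({0} : Set ℝ) + μ ({1} : Set ℝ) = μ ({0} : Set ℝ) + 0 := by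
      rw [add_zero]; exact h.symm
    exact (ENNReal.add_right_inj (measure_ne_top μ {0})).mp h'
  -- μ {1/2} = 0
  have hhalf : μ ({1/2} : Set ℝ) = 0 := by
    have h := hb {1/2} (measurableSet_singleton _) (by norm_num)
    have him : (fun x : ℝ => 2 * x) '' {1/2} = {1} := by norm_num
    have him2 : ({1/2} : Set ℝ) ∪ (fun x : ℝ => 1 - x) '' {1/2} = {1/2} := by norm_num
    rw [him, him2] at h
    rw [← h]; exact h1
  -- no atoms
  have hsym : ∀ x : ℝ, μ {x} = μ {1 - x} := by
    intro x
    have := hsingle (1 - x)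
    simpa using this
  have hnoatom : ∀ x : ℝ, μ {x} = 0 := by
    have key : ∀ n : ℕ, ∀ x : ℝ, x ∈ Icc (0:ℝ) 1 → μ {x} ≤ (1/2)^n := by
      intro n
      induction n with
      | zero => intro x _; simpa using prob_le_one
      | succ n ih =>
        have small : ∀ x : ℝ, x ∈ Icc (0:ℝ) (1/2) → μ {x} ≤ (1/2)^(n+1) := by
          intro x hx
          rcases eq_or_lt_of_le hx.2 with heq | hlt
          · rw [heq, hhalf]; exact zero_le
          · have hB := hb {x} (measurableSet_singleton x) (by
              intro y hy; simp only [mem_singleton_iff] at hy; subst hy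
              exact ⟨hx.1, le_of_lt hlt⟩)
            simp only [image_singleton] at hB
            have hdis : Disjoint ({x} : Set ℝ) {1 - x} := by
              simp only [Set.disjoint_singleton]
              intro h; linarith
            rw [measure_union hdis (measurableSet_singleton _), ← hsym x] at hB
            have h2x : (2*x) ∈ Icc (0:ℝ) 1 := ⟨by linarith [hx.1], by linarith⟩
            have hle := ih (2*x) h2x
            rw [hB] at hle
            have hmul : μ {x} * 2 ≤ (1/2:ENNReal)^n := by
              rw [mul_two]; exact hle
            have h2 : μ {x} ≤ (1/2:ENNReal)^n / 2 :=
              (ENNReal.le_div_iff_mul_le (Or.inl (by norm_num)) (Or.inl (by norm_num))).mpr hmul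
            calc μ {x} ≤ (1/2:ENNReal)^n / 2 := h2
              _ = (1/2)^(n+1) := by
                  rw [pow_succ, one_div, div_eq_mul_inv]
        intro x hx
        rcases le_or_gt x (1/2) with h | h
        · exact small x ⟨hx.1, h⟩
        · rw [hsym x]
          exact small (1-x) ⟨by linarith [hx.2], by linarith⟩
    intro x
    by_cases hx : x ∈ Icc (0:ℝ) 1
    · refine le_antisymm ?_ zero_le
      exact ge_of_tendsto' (ENNReal.tendsto_pow_atTop_nhds_zero_of_lt_one
          (by norm_num : (1/2:ENNReal) < 1)) (fun n => key n x hx)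
    · exact hnull {x} (by simp [Set.singleton_inter_eq_empty.mpr hx])
  -- scaling identity for initial intervals
  have gscale : ∀ x : ℝ, x ∈ Icc (0:ℝ) 1 → μ (Icc 0 x) = 2 * μ (Icc 0 (x/2)) := by
    intro x hx
    have hsub : Icc (0:ℝ) (x/2) ⊆ Icc 0 (1/2) := Icc_subset_Icc le_rfl (by linarith [hx.2])
    have hB := hb (Icc 0 (x/2)) measurableSet_Icc hsub
    have him : (fun y : ℝ => 2 * y) '' Icc 0 (x/2) = Icc 0 x := by
      rw [image_mul_left_Icc' (by norm_num : (0:ℝ) < 2)]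
      ring_nf
    have him2 : (fun y : ℝ => 1 - y) '' Icc 0 (x/2) = Icc (1 - x/2) 1 := by
      rw [image_const_sub_Icc]
      norm_num
    rw [him, him2] at hB
    have hinter : μ (Icc (0:ℝ) (x/2) ∩ Icc (1 - x/2) 1) = 0 := by
      refine measure_mono_null (fun y hy => ?_) (hnoatom (1/2))
      obtain ⟨⟨hy0, hy1⟩, hy2, hy3⟩ := hy
      have hx2 : x ≤ 1 := hx.2
      simp only [mem_singleton_iff]
      linarith
    have huni : μ (Icc (0:ℝ) (x/2) ∪ Icc (1 - x/2) 1)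
        = μ (Icc (0:ℝ) (x/2)) + μ (Icc (1-x/2) 1) := by
      have h := measure_union_add_inter (μ := μ) (Icc (0:ℝ) (x/2))
        (measurableSet_Icc : MeasurableSet (Icc (1 - x/2) 1))
      rw [hinter, add_zero] at h
      exact h
    have heqm : μ (Icc (1 - x/2) 1) = μ (Icc (0:ℝ) (x/2)) := by
      have h := ha (Icc (1 - x/2) 1) measurableSet_Icc
      rw [image_const_sub_Icc, sub_self, show (1:ℝ) - (1 - x/2) = x/2 by ring] at h
      exact h.symm
    rw [huni, heqm, ← two_mul] at hB
    exact hB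
  -- symmetry identity for initial intervals
  have gsym : ∀ x : ℝ, x ∈ Icc (0:ℝ) 1 → μ (Icc 0 x) + μ (Icc 0 (1-x)) = 1 := by
    intro x hx
    have h2 : μ (Icc 0 (1-x)) = μ (Icc x 1) := by
      have h := ha (Icc x 1) measurableSet_Icc
      rw [image_const_sub_Icc, sub_self] at h
      exact h
    rw [h2]
    have h := measure_union_add_inter (μ := μ) (Icc (0:ℝ) x)
      (measurableSet_Icc : MeasurableSet (Icc x 1))
    rw [Icc_union_Icc_eq_Icc hx.1 hx.2, Icc_inter_Icc, max_eq_right hx.1,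
      min_eq_left hx.2, Icc_self, hnoatom x, add_zero, hsupp] at h
    exact h.symm
  -- dyadic values
  have gdy : ∀ n k : ℕ, k ≤ 2^n → μ (Icc 0 ((k:ℝ)/2^n)) = ENNReal.ofReal ((k:ℝ)/2^n) := by
    intro n
    induction n with
    | zero =>
      intro k hk
      interval_cases k
      · simp [Icc_self, hnoatom]
      · norm_num
        exact hsupp
    | succ n ih =>
      have half : ∀ k : ℕ, k ≤ 2^n →
          μ (Icc 0 ((k:ℝ)/2^(n+1))) = ENNReal.ofReal ((k:ℝ)/2^(n+1)) := by
        intro k hk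
        have hk' : (k:ℝ) ≤ 2^n := by exact_mod_cast hk
        have hx : ((k:ℝ)/2^n) ∈ Icc (0:ℝ) 1 := by
          constructor
          · positivity
          · rw [div_le_one (by positivity)]; exact hk'
        have hs := gscale _ hx
        have heq : ((k:ℝ)/2^n)/2 = (k:ℝ)/2^(n+1) := by rw [pow_succ]; ring
        rw [heq, ih k hk] at hs
        have h2 : ENNReal.ofReal ((k:ℝ)/2^n) = 2 * ENNReal.ofReal ((k:ℝ)/2^(n+1)) := by
          rw [show (2:ENNReal) = ENNReal.ofReal 2 by norm_num,
            ← ENNReal.ofReal_mul (by norm_num)]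
          congr 1
          rw [pow_succ]
          ring
        rw [h2] at hs
        exact ((ENNReal.mul_right_inj (by norm_num) (by norm_num)).mp hs.symm)
      intro k hk
      rcases le_or_gt k (2^n) with h | h
      · exact half k h
      · set j := 2^(n+1) - k with hjdef
        have hk2 : k ≤ 2^(n+1) := hk
        have hj : j ≤ 2^n := by
          have : 2^(n+1) = 2^n + 2^n := by ring
          omega
        have hjr : (j:ℝ) = 2^(n+1) - (k:ℝ) := by
          rw [hjdef]
          push_cast [Nat.cast_sub hk2]
          ring
        have hkx : (k:ℝ)/2^(n+1) = 1 - (j:ℝ)/2^(n+1) := by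
          rw [hjr]
          field_simp
          ring
        have hmem : ((j:ℝ)/2^(n+1)) ∈ Icc (0:ℝ) 1 := by
          constructor
          · positivity
          · rw [div_le_one (by positivity)]
            have : (j:ℝ) ≤ 2^n := by exact_mod_cast hj
            have h2n : (2:ℝ)^n ≤ 2^(n+1) := by
              rw [pow_succ]; nlinarith [pow_pos (by norm_num : (0:ℝ) < 2) n]
            linarith
        have hs := gsym _ hmem
        rw [half j hj] at hs
        have hs' : μ (Icc 0 (1 - (j:ℝ)/2^(n+1))) + ENNReal.ofReal ((j:ℝ)/2^(n+1)) = 1 := by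
          rw [add_comm]; exact hs
        have := ENNReal.eq_sub_of_add_eq ENNReal.ofReal_ne_top hs'
        rw [hkx, this, ← ENNReal.ofReal_one, ← ENNReal.ofReal_sub _ (by positivity)]
  -- value on all initial intervals
  have gval : ∀ a : ℝ, a ∈ Icc (0:ℝ) 1 → μ (Icc 0 a) = ENNReal.ofReal a := by
    intro a haa
    rcases eq_or_lt_of_le haa.2 with h1' | hlt
    · rw [h1', hsupp, ENNReal.ofReal_one]
    · set k : ℕ → ℕ := fun n => ⌊a * 2^n⌋₊ with hkdef
      have hk1 : ∀ n, (k n : ℝ) ≤ a * 2^n := fun n =>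
        Nat.floor_le (mul_nonneg haa.1 (by positivity))
      have hk2 : ∀ n, a * 2^n < (k n : ℝ) + 1 := fun n => Nat.lt_floor_add_one _
      have hkle : ∀ n, k n + 1 ≤ 2^n := by
        intro n
        have h2n : (0:ℝ) < 2^n := by positivity
        have : (k n : ℝ) < 2^n := lt_of_le_of_lt (hk1 n) (by nlinarith)
        have : k n < 2^n := by exact_mod_cast this
        exact Nat.succ_le_of_lt this
      -- lower bound
      have hlow : ∀ n : ℕ, ENNReal.ofReal ((k n : ℝ)/2^n) ≤ μ (Icc 0 a) := by
        intro n
        have hle : (k n : ℝ)/2^n ≤ a := by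
          rw [div_le_iff₀ (by positivity)]
          exact hk1 n
        rw [← gdy n (k n) (le_trans (Nat.le_succ _) (hkle n))]
        exact measure_mono (Icc_subset_Icc le_rfl hle)
      have hup : ∀ n : ℕ, μ (Icc 0 a) ≤ ENNReal.ofReal (((k n : ℝ) + 1)/2^n) := by
        intro n
        have hle : a ≤ ((k n : ℝ) + 1)/2^n := by
          rw [le_div_iff₀ (by positivity)]
          exact le_of_lt (hk2 n)
        have := gdy n (k n + 1) (hkle n)
        push_cast at this
        rw [← this]
        exact measure_mono (Icc_subset_Icc le_rfl hle)
      -- limits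
      have htendlow : Filter.Tendsto (fun n : ℕ => (k n : ℝ)/2^n) Filter.atTop (nhds a) := by
        have hpow : Filter.Tendsto (fun n : ℕ => ((1:ℝ)/2)^n) Filter.atTop (nhds 0) :=
          tendsto_pow_atTop_nhds_zero_of_lt_one (by norm_num) (by norm_num)
        refine tendsto_of_tendsto_of_tendsto_of_le_of_le
          (g := fun n : ℕ => a - ((1:ℝ)/2)^n) (h := fun _ : ℕ => a)
          ?_ tendsto_const_nhds ?_ ?_
        · have := Filter.Tendsto.const_sub a hpow
          simpa using this
        · intro n
          show a - ((1:ℝ)/2)^n ≤ (k n : ℝ)/2^n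
          have h2n : (0:ℝ) < 2^n := by positivity
          have hpow1 : ((1:ℝ)/2)^n * 2^n = 1 := by
            rw [div_pow, one_pow, div_mul_cancel₀]
            exact ne_of_gt h2n
          have hq : (k n : ℝ)/2^n * 2^n = (k n : ℝ) := div_mul_cancel₀ _ (ne_of_gt h2n)
          nlinarith [hk2 n]
        · intro n
          show (k n : ℝ)/2^n ≤ a
          have h2n : (0:ℝ) < 2^n := by positivity
          rw [div_le_iff₀ h2n]
          exact hk1 n
      have htendup : Filter.Tendsto (fun n : ℕ => ((k n : ℝ)+1)/2^n) Filter.atTop (nhds a) := by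
        have hpow : Filter.Tendsto (fun n : ℕ => ((1:ℝ)/2)^n) Filter.atTop (nhds 0) :=
          tendsto_pow_atTop_nhds_zero_of_lt_one (by norm_num) (by norm_num)
        refine tendsto_of_tendsto_of_tendsto_of_le_of_le
          (g := fun _ : ℕ => a) (h := fun n : ℕ => a + ((1:ℝ)/2)^n)
          tendsto_const_nhds ?_ ?_ ?_
        · have := Filter.Tendsto.const_add a hpow
          simpa using this
        · intro n
          show a ≤ ((k n : ℝ)+1)/2^n
          have h2n : (0:ℝ) < 2^n := by positivity
          rw [le_div_iff₀ h2n]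
          exact le_of_lt (hk2 n)
        · intro n
          show ((k n : ℝ)+1)/2^n ≤ a + ((1:ℝ)/2)^n
          have h2n : (0:ℝ) < 2^n := by positivity
          have hpow1 : ((1:ℝ)/2)^n * 2^n = 1 := by
            rw [div_pow, one_pow, div_mul_cancel₀]
            exact ne_of_gt h2n
          have hq : ((k n : ℝ)+1)/2^n * 2^n = (k n : ℝ)+1 := div_mul_cancel₀ _ (ne_of_gt h2n)
          nlinarith [hk1 n]
      exact le_antisymm (ge_of_tendsto' (ENNReal.tendsto_ofReal htendup) hup)
        (le_of_tendsto' (ENNReal.tendsto_ofReal htendlow) hlow)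
  -- conclude
  haveI : Fact (volume (Icc (0:ℝ) 1) < ⊤) :=
    ⟨by rw [Real.volume_Icc]; exact ENNReal.ofReal_lt_top⟩
  refine Measure.ext_of_Iic μ _ (fun a => ?_)
  have hseq : Iic a ∩ Icc (0:ℝ) 1 = Icc 0 (min a 1) := by
    ext y
    simp only [mem_inter_iff, mem_Iic, mem_Icc, le_min_iff]
    constructor
    · rintro ⟨h1', h2', h3'⟩; exact ⟨h2', h1', h3'⟩
    · rintro ⟨h1', h2', h3'⟩; exact ⟨h2', h1', h3'⟩
  have key : μ (Iic a) = μ (Icc 0 (min a 1)) := by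
    have hd := measure_inter_add_diff (μ := μ) (Iic a)
      (measurableSet_Icc : MeasurableSet (Icc (0:ℝ) 1))
    have hdiff : μ (Iic a \ Icc 0 1) = 0 :=
      measure_mono_null (fun x hx => hx.2) hout
    rw [hseq, hdiff, add_zero] at hd
    exact hd.symm
  rw [key, Measure.restrict_apply measurableSet_Iic, hseq, Real.volume_Icc, sub_zero]
  rcases le_or_gt 0 a with hp | hn
  · exact gval (min a 1) ⟨le_min hp zero_le_one, min_le_right _ _⟩
  · have hm : min a 1 < 0 := lt_of_le_of_lt (min_le_left a 1) hn
    rw [Icc_eq_empty (not_le.mpr hm), measure_empty,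
      ENNReal.ofReal_of_nonpos (le_of_lt hm)]
end

section
/- Let λ be a Borel probability measure on [0,1] satisfying λ(B) = λ(1-B) and λ(2B) = λ(B ∪ (1-B)) for Borel B ⊂ [0,1/2]. Then λ assigns measure zero to every dyadic rational point: λ({k/2^n}) = 0 for all n ≥ 0 and 0 ≤ k ≤ 2^n. -/
open MeasureTheory Set

/-- A Borel probability measure on [0,1] satisfying the group invariance and
self-similar identities assigns measure zero to every dyadic rational point. -/
theorem stmt9 (μ : Measure ℝ) [IsProbabilityMeasure μ] (hsupp : μ (Set.Icc 0 1) = 1)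
    (ha : ∀ B : Set ℝ, MeasurableSet B → μ ((fun x => 1 - x) '' B) = μ B)
    (hb : ∀ B : Set ℝ, MeasurableSet B → B ⊆ Set.Icc 0 (1/2) →
      μ ((fun x => 2 * x) '' B) = μ (B ∪ (fun x => 1 - x) '' B)) :
    ∀ (n k : ℕ), k ≤ 2 ^ n → μ {((k : ℝ) / 2 ^ n)} = 0 := by
  have hsym : ∀ x : ℝ, μ {1 - x} = μ {x} := by
    intro x
    have := ha {x} (measurableSet_singleton x)
    simpa using this
  have hdouble : ∀ x : ℝ, 0 ≤ x → x < 1/2 → μ {2*x} = 2 * μ {x} := by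
    intro x hx0 hx
    have h := hb {x} (measurableSet_singleton x)
      (by intro y hy; rw [mem_singleton_iff] at hy; subst hy; exact ⟨hx0, hx.le⟩)
    rw [image_singleton, image_singleton] at h
    have hne : x ≠ 1 - x := by intro he; nlinarith
    rw [h, measure_union (by simpa using hne) (measurableSet_singleton _), hsym x, two_mul]
  have h0 : μ {(0:ℝ)} = 0 := by
    have h := hdouble 0 le_rfl (by norm_num)
    simp only [mul_zero] at h
    have h' : μ {(0:ℝ)} + 0 = μ {(0:ℝ)} + μ {(0:ℝ)} := by
      rw [add_zero, ← two_mul]; exact h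
    exact ((ENNReal.add_right_inj (measure_ne_top μ _)).mp h').symm
  have h1 : μ {(1:ℝ)} = 0 := by
    have := hsym 0
    simp only [sub_zero] at this
    rw [this, h0]
  have hhalf : μ {(1/2:ℝ)} = 0 := by
    have h := hb {(1/2:ℝ)} (measurableSet_singleton _)
      (by intro y hy; rw [mem_singleton_iff] at hy; subst hy; constructor <;> norm_num)
    rw [image_singleton, image_singleton] at h
    norm_num at h
    rw [← h, h1]
  intro n
  induction n with
  | zero =>
    intro k hk
    interval_cases k
    · simpa using h0
    · simpa using h1
  | succ n IH =>
    have sub : ∀ k : ℕ, k ≤ 2^n → μ {((k:ℝ) / 2^(n+1))} = 0 := by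
      intro k hk
      rcases eq_or_lt_of_le hk with he | hlt
      · have : ((k:ℝ) / 2^(n+1)) = 1/2 := by
          subst he
          rw [pow_succ]
          push_cast
          field_simp
        rw [this]; exact hhalf
      · have hx0 : (0:ℝ) ≤ (k:ℝ)/2^(n+1) := by positivity
        have hkR : (k:ℝ) < 2^n := by exact_mod_cast hlt
        have hx : (k:ℝ)/2^(n+1) < 1/2 := by
          rw [div_lt_div_iff₀ (by positivity) (by norm_num), pow_succ]
          nlinarith [hkR]
        have h2 := hdouble _ hx0 hx
        have heq : 2 * ((k:ℝ)/2^(n+1)) = (k:ℝ)/2^n := by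
          rw [pow_succ]; field_simp
        rw [heq, IH k hlt.le] at h2
        have := h2.symm
        simpa using this
    intro k hk
    by_cases hk2 : k ≤ 2^n
    · exact sub k hk2
    · push_neg at hk2
      have hpow : 2^(n+1) = 2^n + 2^n := by rw [pow_succ]; omega
      have hk' : 2^(n+1) - k ≤ 2^n := by omega
      have hs := sub _ hk'
      have hcast : ((2^(n+1) - k : ℕ) : ℝ) = 2^(n+1) - (k:ℝ) := by
        rw [Nat.cast_sub hk]; push_cast; ring
      have key : ((k:ℝ)/2^(n+1)) = 1 - ((2^(n+1) - k : ℕ):ℝ)/2^(n+1) := by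
        rw [hcast]; field_simp; ring
      rw [key, hsym, hs]
end

section
/- Let λ be a Borel probability measure on [0,1] satisfying λ(B) = λ(1-B) for all Borel B, and λ(2B) = λ(B ∪ (1-B)) for all Borel B ⊂ [0,1/2]. Then for every dyadic interval I = [k/2^n, (k+1)/2^n], λ(I) = 1/2^n. -/
open MeasureTheory Set

/-- A Borel probability measure on [0,1] satisfying the group invariance and
self-similar identities gives every dyadic interval [k/2^n, (k+1)/2^n] measure
1/2^n. -/
theorem stmt10 (μ : Measure ℝ) [IsProbabilityMeasure μ] (hsupp : μ (Set.Icc 0 1) = 1)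
    (ha : ∀ B : Set ℝ, MeasurableSet B → μ ((fun x => 1 - x) '' B) = μ B)
    (hb : ∀ B : Set ℝ, MeasurableSet B → B ⊆ Set.Icc 0 (1/2) →
      μ ((fun x => 2 * x) '' B) = μ (B ∪ (fun x => 1 - x) '' B)) :
    ∀ (n k : ℕ), k < 2 ^ n →
      μ (Set.Icc ((k : ℝ) / 2 ^ n) (((k : ℝ) + 1) / 2 ^ n)) = 1 / 2 ^ n := by
  -- μ {1} = 0
  have h10 : μ {(1:ℝ)} = 0 := by
    have h := hb {0} (measurableSet_singleton 0) (by norm_num)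
    have him2 : (fun x : ℝ => 2 * x) '' {0} = {0} := by simp
    have him1 : (fun x : ℝ => 1 - x) '' {(0:ℝ)} = {1} := by simp
    rw [him2, him1] at h
    have hdisj : Disjoint ({(0:ℝ)} : Set ℝ) {1} := by
      simp [Set.disjoint_singleton]
    rw [measure_union hdisj (measurableSet_singleton 1)] at h
    have hfin : μ {(0:ℝ)} ≠ ⊤ := measure_ne_top μ _
    exact ((ENNReal.add_right_inj hfin).mp (by rw [add_zero]; exact h)).symm
  have hhalf : μ {(1/2 : ℝ)} = 0 := by
    have h := hb {1/2} (measurableSet_singleton _) (by norm_num)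
    have him2 : (fun x : ℝ => 2 * x) '' {1/2} = {1} := by norm_num
    have him1 : (fun x : ℝ => 1 - x) '' {(1/2:ℝ)} = {1/2} := by norm_num
    rw [him2, him1, Set.union_self] at h
    rw [← h, h10]
  intro n
  induction n with
  | zero =>
    intro k hk
    interval_cases k
    simpa using hsupp
  | succ n IH =>
    have key : ∀ k : ℕ, k < 2 ^ n →
        μ (Set.Icc ((k : ℝ) / 2 ^ (n+1)) (((k : ℝ) + 1) / 2 ^ (n+1))) = 1 / 2 ^ (n+1) := by
      intro k hk
      have hk' : (k : ℝ) + 1 ≤ 2 ^ n := by exact_mod_cast Nat.succ_le_of_lt hk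
      have hkpos : (0:ℝ) ≤ k := Nat.cast_nonneg k
      have hpow : (0:ℝ) < 2 ^ (n+1) := by positivity
      set a : ℝ := (k : ℝ) / 2 ^ (n+1) with hadef
      set b : ℝ := ((k : ℝ) + 1) / 2 ^ (n+1) with hbdef
      have hb2 : b ≤ 1/2 := by
        rw [hbdef, div_le_iff₀ hpow]
        rw [show ((2:ℝ)^(n+1)) = 2 * 2^n by ring]
        nlinarith
      have ha0 : 0 ≤ a := by positivity
      have hsub : Set.Icc a b ⊆ Set.Icc 0 (1/2) :=
        Set.Icc_subset_Icc ha0 hb2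
      have h := hb (Set.Icc a b) measurableSet_Icc hsub
      have him2 : (fun x : ℝ => 2 * x) '' Set.Icc a b
          = Set.Icc ((k:ℝ)/2^n) (((k:ℝ)+1)/2^n) := by
        rw [show (fun x : ℝ => 2 * x) = (fun x : ℝ => 2 * x) from rfl,
          Set.image_mul_left_Icc' (by norm_num : (0:ℝ) < 2)]
        congr 1 <;> (simp only [hadef, hbdef] <;> field_simp <;> ring)
      have him1 : (fun x : ℝ => 1 - x) '' Set.Icc a b = Set.Icc (1-b) (1-a) :=
        Set.image_const_sub_Icc 1 a b
      rw [him2, him1, IH k hk] at h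
      -- intersection is small
      have hJ : Set.Icc a b ∩ Set.Icc (1-b) (1-a) ⊆ {(1/2 : ℝ)} := by
        intro x hx
        have h1 : x ≤ 1/2 := le_trans hx.1.2 hb2
        have h2 : (1:ℝ)/2 ≤ x := le_trans (by linarith) hx.2.1
        simp [le_antisymm h1 h2]
      have hinter : μ (Set.Icc a b ∩ Set.Icc (1-b) (1-a)) = 0 :=
        le_antisymm (le_trans (measure_mono hJ) (le_of_eq hhalf)) (by simp)
      have hunion := measure_union_add_inter (μ := μ) (Set.Icc a b)
        (measurableSet_Icc : MeasurableSet (Set.Icc (1-b) (1-a)))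
      rw [hinter, add_zero] at hunion
      have hsym : μ (Set.Icc (1-b) (1-a)) = μ (Set.Icc a b) := by
        rw [← him1]; exact ha _ measurableSet_Icc
      rw [hunion, hsym] at h
      -- h : 1 / 2^n = μ I + μ I
      have hsplit : (1:ENNReal) / 2 ^ n = 2 * (1 / 2 ^ (n+1)) := by
        rw [show ((2:ENNReal) * (1 / 2^(n+1))) = 2 * 1 / 2^(n+1) from (mul_div_assoc 2 1 _).symm,
          pow_succ, mul_comm ((2:ENNReal)^n) 2,
          ENNReal.mul_div_mul_left 1 (2^n) (by norm_num) ENNReal.ofNat_ne_top]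
      have h2 : (2:ENNReal) * μ (Set.Icc a b) = 2 * (1 / 2 ^ (n+1)) := by
        rw [two_mul, ← h, hsplit]
      exact (ENNReal.mul_right_inj (by norm_num) ENNReal.ofNat_ne_top).mp h2
    intro k hk
    by_cases hcase : k < 2 ^ n
    · exact key k hcase
    · push_neg at hcase
      set k' : ℕ := 2 ^ (n+1) - 1 - k with hk'def
      have hk'lt : k' < 2 ^ n := by
        have : 2 ^ (n+1) = 2 ^ n + 2 ^ n := by ring
        omega
      have hcast : (1:ℝ) - ((k:ℝ)+1) / 2^(n+1) = (k' : ℝ) / 2^(n+1) ∧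
          (1:ℝ) - (k:ℝ) / 2^(n+1) = ((k' : ℝ)+1) / 2^(n+1) := by
        have h1 : (k' : ℝ) = 2^(n+1) - 1 - k := by
          have h0 : (k' : ℕ) + k + 1 = 2 ^ (n+1) := by omega
          have := congrArg (fun m : ℕ => (m : ℝ)) h0
          push_cast at this
          push_cast
          linarith
        constructor <;> (rw [h1]; field_simp; ring)
      have him : (fun x : ℝ => 1 - x) '' Set.Icc ((k:ℝ)/2^(n+1)) (((k:ℝ)+1)/2^(n+1))
          = Set.Icc ((k':ℝ)/2^(n+1)) (((k':ℝ)+1)/2^(n+1)) := by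
        rw [Set.image_const_sub_Icc, hcast.1, hcast.2]
      have := ha (Set.Icc ((k:ℝ)/2^(n+1)) (((k:ℝ)+1)/2^(n+1))) measurableSet_Icc
      rw [him] at this
      rw [← this, key k' hk'lt]
end

section
/- Let B ⊂ K_0 be invariant under the subgroup A'_d of symmetries of the Sierpinski gasket K that fix the cell K_0. Then the set ⋃_{i=0}^d R_{0i}B is invariant under the full symmetry group of K, and moreover (⋃_{i=0}^d R_{0i}B) ∩ K_0 = B. -/
open MeasureTheory Set Filter Topology RealInnerProductSpace
noncomputable section

variable {d : ℕ}

private lemma aux_inner_sub_sub (a b c e : E d) :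
    ⟪a - b, c - e⟫ = (dist a e ^ 2 + dist b c ^ 2 - dist a c ^ 2 - dist b e ^ 2) / 2 := by
  have h : ∀ u v : E d, ‖u - v‖ ^ 2 = ‖u‖ ^ 2 - 2 * ⟪u, v⟫ + ‖v‖ ^ 2 := fun u v => norm_sub_sq_real u v
  simp only [dist_eq_norm, h, inner_sub_left, inner_sub_right]
  ring

private lemma aux_sq_dist_midpoint (a b c : E d) :
    dist (midpoint ℝ a b) c ^ 2 = (dist a c ^ 2 + dist b c ^ 2) / 2 - dist a b ^ 2 / 4 := by
  have hm : midpoint ℝ a b - c = ((2:ℝ)⁻¹) • ((a - c) + (b - c)) := by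
    rw [midpoint_eq_smul_add]
    rw [invOf_eq_inv]
    rw [smul_add, smul_add]
    module
  have h1 := norm_add_sq_real (a - c) (b - c)
  have h2 := norm_sub_sq_real (a - c) (b - c)
  have h3 : (a - c) - (b - c) = a - b := by abel
  rw [h3] at h2
  rw [dist_eq_norm, dist_eq_norm, dist_eq_norm, dist_eq_norm, hm, norm_smul]
  have hnn : ‖(2:ℝ)⁻¹‖ = 2⁻¹ := by norm_num
  rw [hnn, mul_pow]
  linear_combination h1 / 4 + h2 / 4

private def fA (p : Fin (d+1) → E d) (k : Fin (d+1)) (x : E d) : ℝ :=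
  (∑ j, dist x (p j) ^ 2) - (d + 1 : ℝ) * dist x (p k) ^ 2 + 1

private lemma fA_apply_vertex (p : Fin (d+1) → E d)
    (hp : ∀ i j, i ≠ j → dist (p i) (p j) = 1) (k j : Fin (d+1)) :
    fA p k (p j) = if j = k then (d+1:ℝ) else 0 := by
  have hsum : ∀ l, (∑ j' : Fin (d+1), dist (p l) (p j') ^ 2) = (d : ℝ) := by
    intro l
    have h1 : ∀ j' : Fin (d+1), dist (p l) (p j') ^ 2 = (1:ℝ) - (if j' = l then (1:ℝ) else 0) := by
      intro j'
      rcases eq_or_ne j' l with rfl | hne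
      · simp
      · rw [if_neg hne, hp l j' (Ne.symm hne)]; norm_num
    rw [Finset.sum_congr rfl (fun j' _ => h1 j'), Finset.sum_sub_distrib,
      Finset.sum_ite_eq' Finset.univ l (fun _ => (1:ℝ)), Finset.sum_const,
      Finset.card_univ, Fintype.card_fin]
    simp
  have hd : ∀ m, dist (p j) (p m) ^ 2 = if j = m then (0:ℝ) else 1 := by
    intro m
    rcases eq_or_ne j m with rfl | hne
    · simp
    · rw [if_neg hne, hp j m hne]; norm_num
  rw [fA, hsum j, hd k]
  rcases eq_or_ne j k with rfl | hne
  · rw [if_pos rfl, if_pos rfl]; ring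
  · rw [if_neg hne, if_neg hne]; ring

private lemma fA_midpoint (p : Fin (d+1) → E d) (k : Fin (d+1)) (a b : E d) :
    fA p k (midpoint ℝ a b) = (fA p k a + fA p k b) / 2 := by
  simp only [fA, aux_sq_dist_midpoint, Finset.sum_sub_distrib,
    Finset.sum_const, Finset.card_univ, Fintype.card_fin, nsmul_eq_mul]
  have hsplit : ∑ x : Fin (d+1), (dist a (p x) ^ 2 + dist b (p x) ^ 2) / 2
      = (∑ x : Fin (d+1), dist a (p x) ^ 2 + ∑ x : Fin (d+1), dist b (p x) ^ 2) / 2 := by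
    rw [← Finset.sum_add_distrib, Finset.sum_div]
  rw [hsplit]
  push_cast
  ring

private lemma fA_continuous (p : Fin (d+1) → E d) (k : Fin (d+1)) : Continuous (fA p k) := by
  unfold fA
  exact (((continuous_finset_sum _ fun j _ => (continuous_id.dist continuous_const).pow 2)).sub
    (continuous_const.mul ((continuous_id.dist continuous_const).pow 2))).add continuous_const

private lemma decomp (p : Fin (d+1) → E d) {K : Set (E d)} (hKself : K = ⋃ i, F p i '' K)
    {x : E d} (hx : x ∈ K) : ∃ i, ∃ y ∈ K, x = F p i y := by
  rw [hKself] at hx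
  rcases Set.mem_iUnion.mp hx with ⟨i, hi⟩
  rcases hi with ⟨y, hy, hxy⟩
  exact ⟨i, y, hy, hxy.symm⟩

private lemma fA_bounds (p : Fin (d+1) → E d)
    (hp : ∀ i j, i ≠ j → dist (p i) (p j) = 1)
    {K : Set (E d)} (hKc : IsCompact K) (hKne : K.Nonempty)
    (hKself : K = ⋃ i, F p i '' K) (k : Fin (d+1)) :
    ∀ x ∈ K, 0 ≤ fA p k x ∧ fA p k x ≤ (d+1:ℝ) := by
  obtain ⟨xM, hxM, hmax⟩ := hKc.exists_isMaxOn hKne (fA_continuous p k).continuousOn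
  obtain ⟨xm, hxm, hmin⟩ := hKc.exists_isMinOn hKne (fA_continuous p k).continuousOn
  have hvle : ∀ i, fA p k (p i) ≤ (d+1:ℝ) ∧ 0 ≤ fA p k (p i) := by
    intro i
    rcases eq_or_ne i k with rfl | h
    · rw [fA_apply_vertex p hp, if_pos rfl]
      exact ⟨le_refl _, by positivity⟩
    · rw [fA_apply_vertex p hp, if_neg h]
      constructor <;> positivity
  have hM : fA p k xM ≤ (d+1:ℝ) := by
    obtain ⟨i, y, hy, hxy⟩ := decomp p hKself hxM
    have h1 : fA p k xM = (fA p k (p i) + fA p k y) / 2 := by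
      rw [hxy]; exact fA_midpoint p k (p i) y
    have h3 : fA p k y ≤ fA p k xM := hmax hy
    linarith [(hvle i).1]
  have hm : 0 ≤ fA p k xm := by
    obtain ⟨i, y, hy, hxy⟩ := decomp p hKself hxm
    have h1 : fA p k xm = (fA p k (p i) + fA p k y) / 2 := by
      rw [hxy]; exact fA_midpoint p k (p i) y
    have h3 : fA p k xm ≤ fA p k y := hmin hy
    linarith [(hvle i).2]
  exact fun x hx => ⟨le_trans hm (hmin hx), le_trans (hmax hx) hM⟩

private lemma iter_dist (p : Fin (d+1) → E d) (k : Fin (d+1)) :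
    ∀ (m : ℕ) (z : E d), dist ((F p k)^[m] z) (p k) = dist z (p k) / 2 ^ m := by
  intro m
  induction m with
  | zero => intro z; simp
  | succ m ih =>
    intro z
    rw [Function.iterate_succ_apply', F, dist_midpoint_left, dist_comm, ih]
    simp only [Real.norm_ofNat]
    ring

private lemma const_div_pow_tendsto (r : ℝ) :
    Tendsto (fun n : ℕ => r / 2 ^ n) atTop (𝓝 0) := by
  have h := (tendsto_pow_atTop_nhds_zero_of_lt_one (by norm_num : (0:ℝ) ≤ 2⁻¹)
    (by norm_num : (2:ℝ)⁻¹ < 1)).const_mul r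
  simpa [div_eq_mul_inv, ← inv_pow] using h

private lemma iter_eq_vertex {K : Set (E d)} (hKc : IsCompact K) (p : Fin (d+1) → E d)
    (k : Fin (d+1)) (x : E d)
    (h : ∀ n : ℕ, ∃ y ∈ K, x = (F p k)^[n] y) : x = p k := by
  obtain ⟨r, hr⟩ := hKc.isBounded.subset_closedBall (p k)
  have key : ∀ n : ℕ, dist x (p k) ≤ r / 2 ^ n := by
    intro n
    obtain ⟨y, hy, hxy⟩ := h n
    rw [hxy, iter_dist p k n y]
    have hyr : dist y (p k) ≤ r := by simpa [Metric.mem_closedBall] using hr hy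
    gcongr
  have hle : dist x (p k) ≤ 0 := ge_of_tendsto' (const_div_pow_tendsto r) key
  exact dist_le_zero.mp hle

private lemma eq_vertex_of_fA_max (p : Fin (d+1) → E d)
    (hp : ∀ i j, i ≠ j → dist (p i) (p j) = 1)
    {K : Set (E d)} (hKc : IsCompact K) (hKne : K.Nonempty)
    (hKself : K = ⋃ i, F p i '' K) (k : Fin (d+1)) (x : E d) (hx : x ∈ K)
    (hfx : fA p k x = (d+1:ℝ)) : x = p k := by
  have hb := fA_bounds p hp hKc hKne hKself k
  have hd1 : (0:ℝ) < (d:ℝ) + 1 := by positivity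
  have step : ∀ z ∈ K, fA p k z = (d+1:ℝ) → ∃ y ∈ K, z = F p k y ∧ fA p k y = (d+1:ℝ) := by
    intro z hz hfz
    obtain ⟨i, y, hy, hzy⟩ := decomp p hKself hz
    have h1 : fA p k z = (fA p k (p i) + fA p k y) / 2 := by
      rw [hzy]; exact fA_midpoint p k (p i) y
    have h2 : fA p k y ≤ (d+1:ℝ) := (hb y hy).2
    have h3 : fA p k (p i) = if i = k then (d+1:ℝ) else 0 := fA_apply_vertex p hp k i
    have hik : i = k := by
      by_contra hne
      rw [if_neg hne] at h3
      rw [hfz, h3] at h1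
      linarith
    subst hik
    rw [if_pos rfl] at h3
    refine ⟨y, hy, hzy, ?_⟩
    rw [hfz, h3] at h1
    linarith
  have iterate : ∀ n : ℕ, ∃ y ∈ K, x = (F p k)^[n] y ∧ fA p k y = (d+1:ℝ) := by
    intro n
    induction n with
    | zero => exact ⟨x, hx, rfl, hfx⟩
    | succ n ih =>
      obtain ⟨y, hy, hxy, hfy⟩ := ih
      obtain ⟨y', hy', hyy', hfy'⟩ := step y hy hfy
      exact ⟨y', hy', by rw [hxy, hyy', Function.iterate_succ_apply], hfy'⟩
  exact iter_eq_vertex hKc p k x (fun n => (iterate n).imp (fun y hy => ⟨hy.1, hy.2.1⟩))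

private lemma vertex_mem (p : Fin (d+1) → E d) {K : Set (E d)} (hKc : IsCompact K)
    (hKne : K.Nonempty) (hKself : K = ⋃ i, F p i '' K) (i : Fin (d+1)) : p i ∈ K := by
  obtain ⟨x0, hx0⟩ := hKne
  have hFsub : ∀ j, F p j '' K ⊆ K := by
    intro j
    conv_rhs => rw [hKself]
    exact Set.subset_iUnion (fun j => F p j '' K) j
  have hmem : ∀ n : ℕ, (F p i)^[n] x0 ∈ K := by
    intro n
    induction n with
    | zero => exact hx0
    | succ n ih =>
      rw [Function.iterate_succ_apply']
      exact hFsub i ⟨_, ih, rfl⟩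
  have htend : Tendsto (fun n : ℕ => (F p i)^[n] x0) atTop (𝓝 (p i)) := by
    rw [tendsto_iff_dist_tendsto_zero]
    simp only [iter_dist p i]
    exact const_div_pow_tendsto _
  exact hKc.isClosed.mem_of_tendsto htend (Filter.Eventually.of_forall hmem)

set_option maxHeartbeats 1000000 in
private lemma diam_le_one (p : Fin (d+1) → E d)
    (hp : ∀ i j, i ≠ j → dist (p i) (p j) = 1)
    {K : Set (E d)} (hKc : IsCompact K) (hKne : K.Nonempty)
    (hKself : K = ⋃ i, F p i '' K) : ∀ x ∈ K, ∀ y ∈ K, dist x y ≤ 1 := by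
  have hc : ContinuousOn (fun q : E d × E d => dist q.1 q.2) (K ×ˢ K) :=
    continuous_dist.continuousOn
  obtain ⟨⟨xM, yM⟩, hmem, hmax⟩ := (hKc.prod hKc).exists_isMaxOn (hKne.prod hKne) hc
  obtain ⟨hxM, hyM⟩ := Set.mem_prod.mp hmem
  obtain ⟨i, a, ha, hxa⟩ := decomp p hKself hxM
  obtain ⟨j, b, hb, hyb⟩ := decomp p hKself hyM
  have hpij : dist (p i) (p j) ≤ 1 := by
    rcases eq_or_ne i j with rfl | hne
    · simp
    · rw [hp i j hne]
  have hab : dist a b ≤ dist xM yM := isMaxOn_iff.mp hmax (a, b) (Set.mk_mem_prod ha hb)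
  have hxa' : xM = F p i a := hxa
  have hyb' : yM = F p j b := hyb
  have hle : dist xM yM ≤ (dist (p i) (p j) + dist a b) / 2 := by
    rw [hxa', hyb', F, F]
    exact dist_midpoint_midpoint_le _ _ _ _
  have hM1 : dist xM yM ≤ 1 := by linarith
  exact fun x hx y hy => le_trans (isMaxOn_iff.mp hmax (x, y) (Set.mk_mem_prod hx hy)) hM1

private lemma midpoint_sub (u v u' v' : E d) :
    midpoint ℝ u v - midpoint ℝ u' v' = midpoint ℝ (u - u') (v - v') := by
  simp only [midpoint_eq_smul_add, invOf_eq_inv, smul_add, smul_sub]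
  module

private lemma norm_add_eq_two {u v : E d} (hu : ‖u‖ ≤ 1) (hv : ‖v‖ ≤ 1)
    (h : ‖u + v‖ = 2) : u = v ∧ ‖u‖ = 1 := by
  have htri : ‖u + v‖ ≤ ‖u‖ + ‖v‖ := norm_add_le u v
  have hu1 : ‖u‖ = 1 := by linarith
  have hv1 : ‖v‖ = 1 := by linarith
  have hsq := norm_add_sq_real u v
  rw [h, hu1, hv1] at hsq
  have hinner : ⟪u, v⟫ = 1 := by nlinarith
  have hiff := inner_eq_norm_mul_iff_real (x := u) (y := v)
  rw [hu1, hv1, hinner] at hiff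
  refine ⟨?_, hu1⟩
  simpa using hiff.mp (by norm_num)

private lemma vertex_index_eq (p : Fin (d+1) → E d)
    (hp : ∀ i j, i ≠ j → dist (p i) (p j) = 1) {i j k l : Fin (d+1)}
    (hij : i ≠ j) (h : p i - p j = p k - p l) : i = k ∧ j = l := by
  have hinner : ⟪p i - p j, p k - p l⟫ = 1 := by
    rw [← h, real_inner_self_eq_norm_sq, ← dist_eq_norm, hp i j hij]
    norm_num
  rw [aux_inner_sub_sub] at hinner
  have hle : ∀ a b : Fin (d+1), dist (p a) (p b) ^ 2 ≤ 1 := by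
    intro a b
    rcases eq_or_ne a b with rfl | hne
    · simp
    · rw [hp a b hne]; norm_num
  have hge : ∀ a b : Fin (d+1), 0 ≤ dist (p a) (p b) ^ 2 := fun a b => by positivity
  have hik : dist (p i) (p k) ^ 2 = 0 := by
    have h1 := hle i l; have h2 := hle j k
    have h3 := hge i k; have h4 := hge j l
    linarith
  have hjl : dist (p j) (p l) ^ 2 = 0 := by
    have h1 := hle i l; have h2 := hle j k
    have h3 := hge i k; have h4 := hge j l
    linarith
  constructor
  · by_contra hne
    rw [hp i k hne] at hik; norm_num at hik
  · by_contra hne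
    rw [hp j l hne] at hjl; norm_num at hjl

private lemma core_decomp (p : Fin (d+1) → E d)
    (hp : ∀ i j, i ≠ j → dist (p i) (p j) = 1)
    {K : Set (E d)} (hKc : IsCompact K) (hKne : K.Nonempty)
    (hKself : K = ⋃ i, F p i '' K) {a b : E d} (ha : a ∈ K) (hb : b ∈ K)
    (hab : ‖a - b‖ = 1) :
    ∃ k l : Fin (d+1), k ≠ l ∧ ∃ a' ∈ K, ∃ b' ∈ K,
      a = F p k a' ∧ b = F p l b' ∧ a' - b' = p k - p l ∧ a - b = p k - p l := by
  obtain ⟨k, a', ha', hak⟩ := decomp p hKself ha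
  obtain ⟨l, b', hb', hbl⟩ := decomp p hKself hb
  have hmid : a - b = midpoint ℝ (p k - p l) (a' - b') := by
    rw [hak, hbl, F, F, midpoint_sub]
  have h2 : ‖(p k - p l) + (a' - b')‖ = 2 := by
    have h' : ‖midpoint ℝ (p k - p l) (a' - b')‖ = 1 := by rw [← hmid, hab]
    rw [midpoint_eq_smul_add, norm_smul] at h'
    have : ‖(⅟2 : ℝ)‖ = 1/2 := by rw [invOf_eq_inv]; norm_num
    rw [this] at h'
    linarith
  have hkl1 : ‖p k - p l‖ ≤ 1 := by
    rcases eq_or_ne k l with rfl | hne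
    · simp
    · rw [← dist_eq_norm, hp k l hne]
  have hab'1 : ‖a' - b'‖ ≤ 1 := by
    rw [← dist_eq_norm]
    exact diam_le_one p hp hKc hKne hKself a' ha' b' hb'
  obtain ⟨heq, hn1⟩ := norm_add_eq_two hkl1 hab'1 h2
  have hkl : k ≠ l := by
    rintro rfl
    rw [sub_self, norm_zero] at hn1; norm_num at hn1
  have habkl : a - b = p k - p l := by
    rw [hmid, ← heq, midpoint_self]
  exact ⟨k, l, hkl, a', ha', b', hb', hak, hbl, heq.symm, habkl⟩

private lemma eq_vertex_of_dist_one (p : Fin (d+1) → E d)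
    (hp : ∀ i j, i ≠ j → dist (p i) (p j) = 1)
    {K : Set (E d)} (hKc : IsCompact K) (hKne : K.Nonempty)
    (hKself : K = ⋃ i, F p i '' K) {x y : E d} (hx : x ∈ K) (hy : y ∈ K)
    (hdist : dist x y = 1) : ∃ i, x = p i := by
  obtain ⟨i, j, hij, -, -, -, -, -, -, -, hxy⟩ :=
    core_decomp p hp hKc hKne hKself hx hy (by rw [← dist_eq_norm, hdist])
  have iterate : ∀ n : ℕ, ∃ a ∈ K, ∃ b ∈ K, x = (F p i)^[n] a ∧ y = (F p j)^[n] b ∧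
      a - b = p i - p j := by
    intro n
    induction n with
    | zero => exact ⟨x, hx, y, hy, rfl, rfl, hxy⟩
    | succ n ih =>
      obtain ⟨a, ha, b, hb, hxa, hyb, hab⟩ := ih
      have hab1 : ‖a - b‖ = 1 := by rw [hab, ← dist_eq_norm, hp i j hij]
      obtain ⟨k, l, hkl, a', ha', b', hb', hak, hbl, hab', habkl⟩ :=
        core_decomp p hp hKc hKne hKself ha hb hab1
      obtain ⟨rfl, rfl⟩ := vertex_index_eq p hp (k := k) (l := l) hij (hab ▸ habkl)
      exact ⟨a', ha', b', hb',
        by rw [hxa, hak, Function.iterate_succ_apply],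
        by rw [hyb, hbl, Function.iterate_succ_apply], hab'⟩
  refine ⟨i, iter_eq_vertex hKc p i x fun n => ?_⟩
  obtain ⟨a, ha, b, hb, hxa, -, -⟩ := iterate n
  exact ⟨a, ha, hxa⟩

private lemma symm_image (e : E d ≃ᵢ E d) (S : Set (E d)) (h : e '' S = S) :
    e.symm '' S = S := by
  conv_lhs => rw [← h]
  rw [← Set.image_comp]
  have : ⇑e.symm ∘ ⇑e = id := funext e.symm_apply_apply
  rw [this, Set.image_id]

private lemma sym_fix_K0 (p : Fin (d+1) → E d) (K : Set (E d)) (g : E d ≃ᵢ E d)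
    (hgK : g '' K = K) (hfix : g (p 0) = p 0) :
    g '' (F p 0 '' K) = F p 0 '' K := by
  have hcomm : (fun x => g (F p 0 x)) = (fun x => F p 0 (g x)) := by
    funext x
    rw [F, F, g.map_midpoint, hfix]
  calc g '' (F p 0 '' K) = (fun x => g (F p 0 x)) '' K := by rw [Set.image_image]
    _ = (fun x => F p 0 (g x)) '' K := by rw [hcomm]
    _ = F p 0 '' (g '' K) := (Set.image_image _ _ _).symm
    _ = F p 0 '' K := by rw [hgK]

private lemma sym_vertex (hd : 1 ≤ d) (p : Fin (d+1) → E d)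
    (hp : ∀ i j, i ≠ j → dist (p i) (p j) = 1)
    {K : Set (E d)} (hKc : IsCompact K) (hKne : K.Nonempty)
    (hKself : K = ⋃ i, F p i '' K) (g : E d ≃ᵢ E d) (hg : g '' K = K) :
    ∃ j, g (p 0) = p j := by
  have h01 : (0 : Fin (d+1)) ≠ 1 := by
    intro h
    have := congrArg Fin.val h
    rw [Fin.val_zero, Fin.val_one'] at this
    rw [Nat.mod_eq_of_lt (by omega)] at this
    omega
  have hgmem : ∀ z ∈ K, g z ∈ K := fun z hz => hg ▸ Set.mem_image_of_mem g hz
  exact eq_vertex_of_dist_one p hp hKc hKne hKself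
    (hgmem _ (vertex_mem p hKc hKne hKself 0)) (hgmem _ (vertex_mem p hKc hKne hKself 1))
    (by rw [g.dist_eq]; exact hp 0 1 h01)

private lemma gB_eq (hd : 1 ≤ d) (p : Fin (d+1) → E d)
    (hp : ∀ i j, i ≠ j → dist (p i) (p j) = 1)
    {K : Set (E d)} (hKc : IsCompact K) (hKne : K.Nonempty)
    (hKself : K = ⋃ i, F p i '' K)
    (R : Fin (d+1) → (E d ≃ᵢ E d)) (hR0 : ∀ x, R 0 x = x)
    (hRsym : ∀ i, (R i) '' K = K)
    (hRswap : ∀ i, i ≠ 0 → R i (p 0) = p i ∧ R i (p i) = p 0 ∧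
      ∀ l, l ≠ 0 → l ≠ i → R i (p l) = p l)
    (B : Set (E d))
    (hBinv : ∀ g : E d ≃ᵢ E d, g '' K = K → g '' (F p 0 '' K) = F p 0 '' K →
      g '' B = B)
    (g : E d ≃ᵢ E d) (hg : g '' K = K) : ∃ j, g '' B = R j '' B := by
  obtain ⟨j, hj⟩ := sym_vertex hd p hp hKc hKne hKself g hg
  refine ⟨j, ?_⟩
  have hRj0 : R j (p 0) = p j := by
    rcases eq_or_ne j 0 with rfl | hne
    · rw [hR0]
    · exact (hRswap j hne).1
  set h : E d ≃ᵢ E d := g.trans (R j).symm with hh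
  have hhco : ⇑h = ⇑(R j).symm ∘ ⇑g := rfl
  have hhK : h '' K = K := by
    rw [hhco, Set.image_comp, hg, symm_image _ _ (hRsym j)]
  have hh0 : h (p 0) = p 0 := by
    show (R j).symm (g (p 0)) = p 0
    rw [hj, ← hRj0, IsometryEquiv.symm_apply_apply]
  have hB := hBinv h hhK (sym_fix_K0 p K h hhK hh0)
  rw [hhco, Set.image_comp] at hB
  calc g '' B = (R j) '' ((R j).symm '' (g '' B)) := by
        rw [← Set.image_comp]
        have : ⇑(R j) ∘ ⇑(R j).symm = id := funext (R j).apply_symm_apply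
        rw [this, Set.image_id]
    _ = R j '' B := by rw [hB]

private lemma cell_inter (p : Fin (d+1) → E d)
    (hp : ∀ i j, i ≠ j → dist (p i) (p j) = 1)
    {K : Set (E d)} (hKc : IsCompact K) (hKne : K.Nonempty)
    (hKself : K = ⋃ i, F p i '' K) (i : Fin (d+1)) (hi : i ≠ 0) {z : E d}
    (hz0 : z ∈ F p 0 '' K) (hzi : z ∈ F p i '' K) : z = midpoint ℝ (p 0) (p i) := by
  obtain ⟨a, ha, hza⟩ := hz0
  obtain ⟨b, hb, hzb⟩ := hzi
  have hbnd := fA_bounds p hp hKc hKne hKself 0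
  have h1 : fA p 0 z = (fA p 0 (p 0) + fA p 0 a) / 2 := by
    rw [← hza]; exact fA_midpoint p 0 (p 0) a
  have h2 : fA p 0 z = (fA p 0 (p i) + fA p 0 b) / 2 := by
    rw [← hzb]; exact fA_midpoint p 0 (p i) b
  have hv0 : fA p 0 (p 0) = (d:ℝ)+1 := by rw [fA_apply_vertex p hp, if_pos rfl]
  have hvi : fA p 0 (p i) = 0 := by rw [fA_apply_vertex p hp, if_neg hi]
  have hfb : fA p 0 b = (d:ℝ)+1 := by
    have ha0 := (hbnd a ha).1
    have hb1 := (hbnd b hb).2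
    linarith
  have hbp : b = p 0 := eq_vertex_of_fA_max p hp hKc hKne hKself 0 b hb hfb
  rw [← hzb, hbp, F, midpoint_comm]

private lemma R_image_K0 (p : Fin (d+1) → E d) {K : Set (E d)}
    (R : Fin (d+1) → (E d ≃ᵢ E d)) (hRsym : ∀ i, (R i) '' K = K)
    (hRswap : ∀ i, i ≠ 0 → R i (p 0) = p i ∧ R i (p i) = p 0 ∧
      ∀ l, l ≠ 0 → l ≠ i → R i (p l) = p l)
    (i : Fin (d+1)) (hi : i ≠ 0) :
    R i '' (F p 0 '' K) = F p i '' K := by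
  have hcomm : (fun x => R i (F p 0 x)) = (fun x => F p i (R i x)) := by
    funext x
    rw [F, F, (R i).map_midpoint, (hRswap i hi).1]
  calc R i '' (F p 0 '' K) = (fun x => R i (F p 0 x)) '' K := by rw [Set.image_image]
    _ = (fun x => F p i (R i x)) '' K := by rw [hcomm]
    _ = F p i '' (R i '' K) := (Set.image_image _ _ _).symm
    _ = F p i '' K := by rw [hRsym i]

/-- If `B ⊆ K₀` is invariant under the subgroup of symmetries fixing the cell
`K₀`, then `⋃ᵢ R₀ᵢ B` is invariant under the full symmetry group, and
`(⋃ᵢ R₀ᵢ B) ∩ K₀ = B`. -/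
theorem stmt13 (hd : 1 ≤ d) (p : Fin (d+1) → E d)
    (hp : ∀ i j, i ≠ j → dist (p i) (p j) = 1)
    (K : Set (E d)) (hKc : IsCompact K) (hKne : K.Nonempty)
    (hKself : K = ⋃ i, F p i '' K)
    (R : Fin (d+1) → (E d ≃ᵢ E d)) (hR0 : ∀ x, R 0 x = x)
    (hRsym : ∀ i, (R i) '' K = K)
    (hRswap : ∀ i, i ≠ 0 → R i (p 0) = p i ∧ R i (p i) = p 0 ∧
      ∀ l, l ≠ 0 → l ≠ i → R i (p l) = p l)
    (B : Set (E d)) (hBsub : B ⊆ F p 0 '' K)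
    (hBinv : ∀ g : E d ≃ᵢ E d, g '' K = K → g '' (F p 0 '' K) = F p 0 '' K →
      g '' B = B) :
    (∀ g : E d ≃ᵢ E d, g '' K = K →
      g '' (⋃ i, R i '' B) = ⋃ i, R i '' B) ∧
    (⋃ i, R i '' B) ∩ (F p 0 '' K) = B := by
  have hsub : ∀ g : E d ≃ᵢ E d, g '' K = K →
      g '' (⋃ i, R i '' B) ⊆ ⋃ i, R i '' B := by
    intro g hg
    rw [Set.image_iUnion]
    refine Set.iUnion_subset fun i => ?_
    have hcomp : ((R i).trans g) '' K = K := by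
      have : ⇑((R i).trans g) = ⇑g ∘ ⇑(R i) := rfl
      rw [this, Set.image_comp, hRsym i, hg]
    obtain ⟨j, hjB⟩ := gB_eq hd p hp hKc hKne hKself R hR0 hRsym hRswap B hBinv
      ((R i).trans g) hcomp
    have heq : g '' (R i '' B) = R j '' B := by
      rw [← hjB, ← Set.image_comp]
      rfl
    rw [heq]
    exact Set.subset_iUnion (fun j => R j '' B) j
  constructor
  · intro g hg
    refine Set.Subset.antisymm (hsub g hg) ?_
    have hg' : g.symm '' K = K := symm_image g K hg
    intro x hx
    have hmem : g.symm x ∈ ⋃ i, R i '' B := hsub g.symm hg' ⟨x, hx, rfl⟩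
    exact ⟨g.symm x, hmem, g.apply_symm_apply x⟩
  · apply Set.Subset.antisymm
    · rintro x ⟨hxU, hxK0⟩
      rw [Set.mem_iUnion] at hxU
      obtain ⟨i, b, hbB, hxb⟩ := hxU
      rcases eq_or_ne i 0 with rfl | hi
      · rw [hR0 b] at hxb
        exact hxb ▸ hbB
      · have hxKi : x ∈ F p i '' K := by
          rw [← R_image_K0 p R hRsym hRswap i hi]
          exact ⟨b, hBsub hbB, hxb⟩
        have hxeq : x = midpoint ℝ (p 0) (p i) :=
          cell_inter p hp hKc hKne hKself i hi hxK0 hxKi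
        have hbx : b = x := by
          have h1 : b = (R i).symm x := by rw [← hxb, IsometryEquiv.symm_apply_apply]
          have e1 : (R i).symm (p 0) = p i := by
            rw [← (hRswap i hi).2.1, IsometryEquiv.symm_apply_apply]
          have e2 : (R i).symm (p i) = p 0 := by
            rw [← (hRswap i hi).1, IsometryEquiv.symm_apply_apply]
          rw [h1, hxeq, (R i).symm.map_midpoint, e1, e2, midpoint_comm, ← hxeq]
        exact hbx ▸ hbB
    · intro x hx
      exact ⟨Set.mem_iUnion.mpr ⟨0, ⟨x, hx, hR0 x⟩⟩, hBsub hx⟩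
end
end

section
/- A Borel probability measure on the d-dimensional Sierpinski gasket K that is invariant under all symmetries of K and satisfies the self-similar identity assigns equal mass to all level-n cells; since distinct dyadic points are contained in arbitrarily small disjoint neighborhoods and there are infinitely many dyadic points of comparable mass, the measure has no atoms at dyadic points: λ({p_x}) = 0 for every nonempty word x. -/
open MeasureTheory Set Filter
noncomputable section

variable {d : ℕ}

namespace Aux16

lemma Fword_cons (p : Fin (d+1) → E d) (i : Fin (d+1)) (w : List (Fin (d+1))) (x : E d) :
    Fword p (i :: w) x = F p i (Fword p w x) := rfl

lemma Fword_nil (p : Fin (d+1) → E d) (x : E d) : Fword p [] x = x := rfl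

lemma F_sub (p : Fin (d+1) → E d) (i : Fin (d+1)) (x y : E d) :
    F p i x - F p i y = (2:ℝ)⁻¹ • (x - y) := by
  rw [F, F, midpoint_eq_smul_add, midpoint_eq_smul_add, ← smul_sub]
  congr 1
  · norm_num


lemma dist_F (p : Fin (d+1) → E d) (i : Fin (d+1)) (x y : E d) :
    dist (F p i x) (F p i y) = dist x y / 2 := by
  rw [dist_eq_norm, dist_eq_norm, F_sub, norm_smul]
  simp
  ring

lemma F_inj (p : Fin (d+1) → E d) (i : Fin (d+1)) : Function.Injective (F p i) := by
  intro x y h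
  have h2 : F p i x - F p i y = 0 := by rw [h, sub_self]
  rw [F_sub] at h2
  have : x - y = 0 := by
    have := smul_eq_zero.mp h2
    rcases this with h3 | h3
    · norm_num at h3
    · exact h3
  exact sub_eq_zero.mp this

lemma F_cont (p : Fin (d+1) → E d) (i : Fin (d+1)) : Continuous (F p i) := by
  have h : (F p i) = fun x => (⅟(2:ℝ)) • (p i + x) := by
    funext x; rw [F, midpoint_eq_smul_add]
  rw [h]; fun_prop

lemma Fword_inj (p : Fin (d+1) → E d) (w : List (Fin (d+1))) :
    Function.Injective (Fword p w) := by
  induction w with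
  | nil => exact fun a b h => h
  | cons i v ih => exact fun a b h => ih (F_inj p i h)

lemma Fword_cont (p : Fin (d+1) → E d) (w : List (Fin (d+1))) :
    Continuous (Fword p w) := by
  induction w with
  | nil => exact continuous_id
  | cons i v ih => exact (F_cont p i).comp ih


variable {p : Fin (d+1) → E d} {K : Set (E d)}

lemma F_mapsTo (hKself : K = ⋃ i, F p i '' K) (i : Fin (d+1)) : F p i '' K ⊆ K := by
  intro x hx; rw [hKself]; exact Set.mem_iUnion.2 ⟨i, hx⟩

lemma pmem (hKc : IsCompact K) (hKne : K.Nonempty) (hKself : K = ⋃ i, F p i '' K)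
    (i : Fin (d+1)) : p i ∈ K := by
  obtain ⟨x, hxK, hdx⟩ := hKc.exists_infDist_eq_dist hKne (p i)
  have h1 : F p i x ∈ K := F_mapsTo hKself i ⟨x, hxK, rfl⟩
  have h2 : Metric.infDist (p i) K ≤ dist (p i) (F p i x) := Metric.infDist_le_dist_of_mem h1
  have h3 : dist (p i) (F p i x) = dist (p i) x / 2 := by
    conv_lhs => rw [show p i = F p i (p i) from (midpoint_self ℝ (p i)).symm]
    exact dist_F p i (p i) x
  have h0 : Metric.infDist (p i) K = 0 := by
    have := Metric.infDist_nonneg (x := p i) (s := K)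
    rw [h3, ← hdx] at h2
    linarith
  exact (hKc.isClosed.mem_iff_infDist_zero hKne).2 h0

lemma K_sub_hull (hKc : IsCompact K) (hKne : K.Nonempty) (hKself : K = ⋃ i, F p i '' K) :
    K ⊆ convexHull ℝ (Set.range p) := by
  set H := convexHull ℝ (Set.range p) with hH
  have hHc : IsCompact H := (Set.finite_range p).isCompact_convexHull ℝ
  have hHcl : IsClosed H := hHc.isClosed
  have hHne : H.Nonempty := ⟨p 0, subset_convexHull ℝ _ (Set.mem_range_self 0)⟩
  obtain ⟨z, hzK, hz⟩ := hKc.exists_isMaxOn hKne ((Metric.continuous_infDist_pt H).continuousOn)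
  have hz0 : Metric.infDist z H = 0 := by
    have hzU : z ∈ ⋃ i, F p i '' K := hKself ▸ hzK
    obtain ⟨j, y, hyK, rfl⟩ := by simpa using hzU
    obtain ⟨h, hhH, hdh⟩ := hHc.exists_infDist_eq_dist hHne y
    have hFh : F p j h ∈ H := by
      have hpj : p j ∈ H := subset_convexHull ℝ _ (Set.mem_range_self j)
      exact (convex_convexHull ℝ _).segment_subset hpj hhH (midpoint_mem_segment (p j) h)
    have h2 : Metric.infDist (F p j y) H ≤ dist y h / 2 := by
      calc Metric.infDist (F p j y) H ≤ dist (F p j y) (F p j h) :=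
            Metric.infDist_le_dist_of_mem hFh
        _ = dist y h / 2 := dist_F p j y h
    have h3 : Metric.infDist y H ≤ Metric.infDist (F p j y) H := hz hyK
    have h4 := Metric.infDist_nonneg (x := F p j y) (s := H)
    rw [← hdh] at h2
    linarith
  intro x hxK
  have : Metric.infDist x H ≤ 0 := hz0 ▸ hz hxK
  have h4 := Metric.infDist_nonneg (x := x) (s := H)
  exact (hHcl.mem_iff_infDist_zero hHne).2 (le_antisymm this h4)


open RealInnerProductSpace in
lemma norm_combo (hp : ∀ i j, i ≠ j → dist (p i) (p j) = 1)
    (c : Fin (d+1) → ℝ) (hc : ∑ i, c i = 0) :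
    ‖∑ i, c i • p i‖^2 = (∑ i, (c i)^2) / 2 := by
  have hip : ∀ i j, ⟪p i, p j⟫ = (‖p i‖^2 + ‖p j‖^2 - (dist (p i) (p j))^2)/2 := by
    intro i j
    have h := norm_sub_sq_real (p i) (p j)
    rw [dist_eq_norm]
    linarith
  have key : ∀ i j, c i * (c j * ⟪p i, p j⟫) =
      (c i * c j * ‖p i‖^2 + c i * c j * ‖p j‖^2 - c i * c j
        + (if i = j then c i * c j else 0))/2 := by
    intro i j
    rw [hip]
    by_cases h : i = j
    · subst h; simp; ring
    · rw [hp i j h]; simp [h]; ring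
  have hA : ∑ i, ∑ j, c i * c j * ‖p i‖^2 = 0 := by
    have h1 : ∀ i ∈ Finset.univ, ∑ j, c i * c j * ‖p i‖^2 = (c i * ‖p i‖^2) * ∑ j, c j := by
      intro i _
      rw [Finset.mul_sum]
      exact Finset.sum_congr rfl (fun j _ => by ring)
    rw [Finset.sum_congr rfl h1]
    simp [hc]
  have hB : ∑ i, ∑ j, c i * c j * ‖p j‖^2 = 0 := by
    rw [Finset.sum_comm]
    have h1 : ∀ j ∈ Finset.univ, ∑ i, c i * c j * ‖p j‖^2 = (c j * ‖p j‖^2) * ∑ i, c i := by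
      intro j _
      rw [Finset.mul_sum]
      exact Finset.sum_congr rfl (fun i _ => by ring)
    rw [Finset.sum_congr rfl h1]
    simp [hc]
  have hC : ∑ i, ∑ j, c i * c j = 0 := by
    have h1 : ∀ i ∈ Finset.univ, ∑ j, c i * c j = c i * ∑ j, c j := by
      intro i _; rw [Finset.mul_sum]
    rw [Finset.sum_congr rfl h1]
    simp [hc]
  have hD : ∑ i, ∑ j, (if i = j then c i * c j else 0) = ∑ i, (c i)^2 := by
    apply Finset.sum_congr rfl
    intro i _
    rw [Finset.sum_ite_eq]
    simp [sq]
  calc ‖∑ i, c i • p i‖^2 = ⟪∑ i, c i • p i, ∑ j, c j • p j⟫ :=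
        (real_inner_self_eq_norm_sq _).symm
    _ = ∑ i, ∑ j, c i * (c j * ⟪p i, p j⟫) := by
        rw [sum_inner]
        refine Finset.sum_congr rfl fun i _ => ?_
        rw [real_inner_smul_left, inner_sum, Finset.mul_sum]
        exact Finset.sum_congr rfl fun j _ => by rw [real_inner_smul_right]
    _ = ∑ i, ∑ j, (c i * c j * ‖p i‖^2 + c i * c j * ‖p j‖^2 - c i * c j
        + (if i = j then c i * c j else 0))/2 := by
        exact Finset.sum_congr rfl fun i _ => Finset.sum_congr rfl fun j _ => key i j
    _ = ((∑ i, ∑ j, c i * c j * ‖p i‖^2) + (∑ i, ∑ j, c i * c j * ‖p j‖^2)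
        - (∑ i, ∑ j, c i * c j) + ∑ i, ∑ j, (if i = j then c i * c j else 0))/2 := by
        simp [← Finset.sum_div, Finset.sum_add_distrib, Finset.sum_sub_distrib]
    _ = (∑ i, (c i)^2) / 2 := by rw [hA, hB, hC, hD]; ring

lemma hull_rep (hpinj : Function.Injective p) (x : E d)
    (hx : x ∈ convexHull ℝ (Set.range p)) :
    ∃ a : Fin (d+1) → ℝ, (∀ i, 0 ≤ a i) ∧ ∑ i, a i = 1 ∧ ∑ i, a i • p i = x := by
  classical
  have hrange : Set.range p = ↑(Finset.image p Finset.univ) := by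
    rw [Finset.coe_image, Finset.coe_univ, Set.image_univ]
  rw [hrange] at hx
  obtain ⟨w, hw0, hw1, hwx⟩ := Finset.mem_convexHull'.mp hx
  refine ⟨fun i => w (p i), fun i => hw0 _ (Finset.mem_image_of_mem p (Finset.mem_univ i)), ?_, ?_⟩
  · rw [← hw1]
    rw [Finset.sum_image (fun i _ j _ h => hpinj h)]
  · rw [← hwx]
    rw [Finset.sum_image (fun i _ j _ h => hpinj h)]


lemma pinj (hp : ∀ i j, i ≠ j → dist (p i) (p j) = 1) : Function.Injective p := by
  intro i j h
  by_contra hne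
  have := hp i j hne
  rw [h] at this
  simp at this

lemma dist_sq_eq (hp : ∀ i j, i ≠ j → dist (p i) (p j) = 1) (a b : Fin (d+1) → ℝ)
    (ha : ∑ i, a i = 1) (hb : ∑ i, b i = 1) :
    dist (∑ i, a i • p i) (∑ i, b i • p i) ^ 2 = (∑ i, (a i - b i)^2)/2 := by
  rw [dist_eq_norm]
  have h1 : ∑ i, a i • p i - ∑ i, b i • p i = ∑ i, (a i - b i) • p i := by
    rw [← Finset.sum_sub_distrib]
    exact Finset.sum_congr rfl fun i _ => (sub_smul _ _ _).symm
  rw [h1, norm_combo hp _ (by rw [Finset.sum_sub_distrib, ha, hb]; ring)]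

lemma sq_sum_le (a : Fin (d+1) → ℝ) (ha0 : ∀ i, 0 ≤ a i) (ha : ∑ i, a i = 1) :
    ∑ i, (a i)^2 ≤ 1 := by
  have hle : ∀ i, a i ≤ 1 := by
    intro i
    calc a i ≤ ∑ j, a j := Finset.single_le_sum (fun j _ => ha0 j) (Finset.mem_univ i)
      _ = 1 := ha
  calc ∑ i, (a i)^2 ≤ ∑ i, a i :=
        Finset.sum_le_sum (fun i _ => by nlinarith [ha0 i, hle i])
    _ = 1 := ha

lemma sum_sq_diff (a b : Fin (d+1) → ℝ) :
    ∑ i, (a i - b i)^2 = ∑ i, (a i)^2 + ∑ i, (b i)^2 - 2*∑ i, a i * b i := by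
  have h : ∀ i ∈ Finset.univ, (a i - b i)^2 = (a i)^2 + (b i)^2 - 2*(a i * b i) :=
    fun i _ => by ring
  rw [Finset.sum_congr rfl h, Finset.sum_sub_distrib, Finset.sum_add_distrib, ← Finset.mul_sum]

lemma dist_le_one_hull (hp : ∀ i j, i ≠ j → dist (p i) (p j) = 1)
    {x y : E d} (hx : x ∈ convexHull ℝ (Set.range p)) (hy : y ∈ convexHull ℝ (Set.range p)) :
    dist x y ≤ 1 := by
  obtain ⟨a, ha0, ha1, rfl⟩ := hull_rep (pinj hp) x hx
  obtain ⟨b, hb0, hb1, rfl⟩ := hull_rep (pinj hp) y hy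
  have h2 := dist_sq_eq hp a b ha1 hb1
  have h3 := sum_sq_diff a b
  have h4 := sq_sum_le a ha0 ha1
  have h5 := sq_sum_le b hb0 hb1
  have h6 : (0:ℝ) ≤ ∑ i, a i * b i :=
    Finset.sum_nonneg fun i _ => mul_nonneg (ha0 i) (hb0 i)
  nlinarith [dist_nonneg (x := ∑ i, a i • p i) (y := ∑ i, b i • p i)]

lemma vertex_of_coords (a : Fin (d+1) → ℝ) (ha0 : ∀ i, 0 ≤ a i) (ha1 : ∑ i, a i = 1)
    (hsq : ∑ i, (a i)^2 = 1) : ∃ k, a k = 1 ∧ ∑ i, a i • p i = p k := by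
  have hle : ∀ i, a i ≤ 1 := by
    intro i
    calc a i ≤ ∑ j, a j := Finset.single_le_sum (fun j _ => ha0 j) (Finset.mem_univ i)
      _ = 1 := ha1
  have hz : ∑ i, a i * (1 - a i) = 0 := by
    have h : ∀ i ∈ Finset.univ, a i * (1 - a i) = a i - (a i)^2 := fun i _ => by ring
    rw [Finset.sum_congr rfl h, Finset.sum_sub_distrib, ha1, hsq, sub_self]
  have h01 : ∀ i, a i = 0 ∨ a i = 1 := by
    intro i
    have := (Finset.sum_eq_zero_iff_of_nonneg
      (fun i _ => mul_nonneg (ha0 i) (by linarith [hle i]))).mp hz i (Finset.mem_univ i)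
    rcases mul_eq_zero.mp this with h | h
    · exact Or.inl h
    · exact Or.inr (by linarith)
  have hex : ∃ k, a k ≠ 0 := by
    by_contra hall
    push_neg at hall
    rw [Finset.sum_congr rfl (fun i _ => hall i)] at ha1
    simp at ha1
  obtain ⟨k, hk⟩ := hex
  have hak : a k = 1 := (h01 k).resolve_left hk
  refine ⟨k, hak, ?_⟩
  have hrest : ∀ i ∈ Finset.univ.erase k, a i = 0 := by
    have hsum : ∑ i ∈ Finset.univ.erase k, a i = 0 := by
      have := Finset.add_sum_erase Finset.univ a (Finset.mem_univ k)
      rw [← this, hak] at ha1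
      linarith
    exact fun i hi => le_antisymm
      (by
        have := Finset.single_le_sum (f := a) (fun j _ => ha0 j) hi
        linarith)
      (ha0 i)
  rw [Finset.sum_eq_single_of_mem k (Finset.mem_univ k)
    (fun i _ hik => by rw [hrest i (Finset.mem_erase.mpr ⟨hik, Finset.mem_univ i⟩), zero_smul]),
    hak, one_smul]

lemma vertices_of_dist_one (hp : ∀ i j, i ≠ j → dist (p i) (p j) = 1)
    {x y : E d} (hx : x ∈ convexHull ℝ (Set.range p)) (hy : y ∈ convexHull ℝ (Set.range p))
    (hxy : dist x y = 1) : ∃ k l, k ≠ l ∧ x = p k ∧ y = p l := by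
  obtain ⟨a, ha0, ha1, rfl⟩ := hull_rep (pinj hp) x hx
  obtain ⟨b, hb0, hb1, rfl⟩ := hull_rep (pinj hp) y hy
  have h2 := dist_sq_eq hp a b ha1 hb1
  have h3 := sum_sq_diff a b
  have h4 := sq_sum_le a ha0 ha1
  have h5 := sq_sum_le b hb0 hb1
  have h6 : (0:ℝ) ≤ ∑ i, a i * b i :=
    Finset.sum_nonneg fun i _ => mul_nonneg (ha0 i) (hb0 i)
  rw [hxy] at h2
  have hsa : ∑ i, (a i)^2 = 1 := by nlinarith
  have hsb : ∑ i, (b i)^2 = 1 := by nlinarith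
  obtain ⟨k, hak, hxk⟩ := vertex_of_coords a ha0 ha1 hsa
  obtain ⟨l, hbl, hyl⟩ := vertex_of_coords b hb0 hb1 hsb
  refine ⟨k, l, ?_, hxk, hyl⟩
  intro hkl
  rw [hxk, hyl, hkl, dist_self] at hxy
  norm_num at hxy

lemma vertex_rel (hp : ∀ i j, i ≠ j → dist (p i) (p j) = 1)
    {i j k l : Fin (d+1)} (hkl : k ≠ l)
    (h : p i + p k = p j + p l) : k = j ∧ l = i := by
  classical
  by_cases hkj : k = j
  · refine ⟨hkj, ?_⟩
    rw [hkj] at h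
    have hpl : p i = p l := by rwa [add_comm (p j) (p l), add_left_inj] at h
    exact (pinj hp hpl).symm
  exfalso
  set c : Fin (d+1) → ℝ := fun m => ((if m = i then 1 else 0) + (if m = k then 1 else 0))
    - ((if m = j then 1 else 0) + (if m = l then 1 else 0)) with hcdef
  have hcsum : ∑ m, c m = 0 := by
    simp [hcdef, Finset.sum_sub_distrib, Finset.sum_add_distrib, Finset.sum_ite_eq']
  have hcvec : ∑ m, c m • p m = 0 := by
    have : ∀ m ∈ Finset.univ, c m • p m =
        ((if m = i then p m else 0) + (if m = k then p m else 0))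
          - ((if m = j then p m else 0) + (if m = l then p m else 0)) := by
      intro m _
      simp only [hcdef]
      split_ifs <;> module
    rw [Finset.sum_congr rfl this]
    rw [Finset.sum_sub_distrib, Finset.sum_add_distrib, Finset.sum_add_distrib]
    simp only [Finset.sum_ite_eq', Finset.mem_univ, if_true]
    rw [sub_eq_zero, h]
  have hzero : ∑ m, (c m)^2 = 0 := by
    have := norm_combo hp c hcsum
    rw [hcvec] at this
    simp at this
    linarith
  have hck : c k = 0 := by
    have := (Finset.sum_eq_zero_iff_of_nonneg (fun m _ => sq_nonneg (c m))).mp hzero k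
      (Finset.mem_univ k)
    exact pow_eq_zero_iff (by norm_num) |>.mp this
  simp only [hcdef, if_pos rfl, if_neg hkj, if_neg hkl] at hck
  split_ifs at hck <;> linarith


lemma zero_ne_one' (hd : 1 ≤ d) : (0 : Fin (d+1)) ≠ 1 := by
  intro h
  have := congrArg Fin.val h
  simp [Fin.val_one'] at this
  omega

lemma level1_inter (hp : ∀ i j, i ≠ j → dist (p i) (p j) = 1)
    (hKc : IsCompact K) (hKne : K.Nonempty) (hKself : K = ⋃ i, F p i '' K)
    {i j : Fin (d+1)} (hij : i ≠ j) {x : E d}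
    (hx : x ∈ F p i '' K ∩ F p j '' K) : x = midpoint ℝ (p i) (p j) := by
  obtain ⟨⟨a, haK, hax⟩, ⟨b, hbK, hbx⟩⟩ := hx
  have hH := K_sub_hull hKc hKne hKself
  have h1 : p i + a = p j + b := by
    have h := congrArg (fun z : E d => z + z) (hax.trans hbx.symm)
    simpa only [F, midpoint_add_self] using h
  have hab : dist a b = 1 := by
    have hsub : a - b = p j - p i :=
      sub_eq_sub_iff_add_eq_add.mpr (by rw [add_comm a (p i)]; exact h1)
    rw [dist_eq_norm, hsub, ← dist_eq_norm]
    exact hp j i hij.symm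
  obtain ⟨k, l, hkl, hak, hbl⟩ := vertices_of_dist_one hp (hH haK) (hH hbK) hab
  rw [hak, hbl] at h1
  obtain ⟨hkj, -⟩ := vertex_rel hp hkl h1
  rw [← hax, hak, hkj]
  rfl

lemma symm_vertex (hd : 1 ≤ d) (hp : ∀ i j, i ≠ j → dist (p i) (p j) = 1)
    (hKc : IsCompact K) (hKne : K.Nonempty) (hKself : K = ⋃ i, F p i '' K)
    (g : E d ≃ᵢ E d) (hg : g '' K = K) :
    ∃ σ : Equiv.Perm (Fin (d+1)), ∀ j, g (p j) = p (σ j) := by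
  have hgK : ∀ x ∈ K, g x ∈ K := fun x hx => hg ▸ Set.mem_image_of_mem g hx
  have hH := K_sub_hull hKc hKne hKself
  have hver : ∀ j, ∃ a, g (p j) = p a := by
    intro j
    obtain ⟨k, hk⟩ : ∃ k, k ≠ j := by
      rcases eq_or_ne j 0 with rfl | hj0
      · exact ⟨1, (zero_ne_one' hd).symm⟩
      · exact ⟨0, fun h => hj0 h.symm⟩
    have hdist : dist (g (p j)) (g (p k)) = 1 := by
      rw [g.dist_eq]
      exact hp j k (Ne.symm hk)
    obtain ⟨a, b, -, hxa, -⟩ := vertices_of_dist_one hp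
      (hH (hgK _ (pmem hKc hKne hKself j))) (hH (hgK _ (pmem hKc hKne hKself k))) hdist
    exact ⟨a, hxa⟩
  choose σ0 hσ0 using hver
  have hinj : Function.Injective σ0 := by
    intro a b hab
    have h : g (p a) = g (p b) := by rw [hσ0 a, hσ0 b, hab]
    exact pinj hp (g.injective h)
  exact ⟨Equiv.ofBijective σ0 (Finite.injective_iff_bijective.mp hinj), hσ0⟩

lemma g_Fword (g : E d ≃ᵢ E d) (σ : Fin (d+1) → Fin (d+1))
    (hgp : ∀ j, g (p j) = p (σ j)) (w : List (Fin (d+1))) (x : E d) :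
    g (Fword p w x) = Fword p (w.map σ) (g x) := by
  induction w with
  | nil => rfl
  | cons i v ih =>
    rw [List.map_cons, Fword_cons, Fword_cons, ← ih]
    show g (midpoint ℝ (p i) (Fword p v x)) = midpoint ℝ (p (σ i)) (g (Fword p v x))
    rw [g.map_midpoint, hgp]

lemma g_cell (g : E d ≃ᵢ E d) (hg : g '' K = K) (σ : Fin (d+1) → Fin (d+1))
    (hgp : ∀ j, g (p j) = p (σ j)) (w : List (Fin (d+1))) :
    g '' Kcell p K w = Kcell p K (w.map σ) := by
  rw [Kcell, Kcell, ← Set.image_comp]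
  have h : g ∘ Fword p w = Fword p (w.map σ) ∘ g := funext fun x => g_Fword g σ hgp w x
  rw [h, Set.image_comp, hg]

lemma sigma_zero (hp : ∀ i j, i ≠ j → dist (p i) (p j) = 1)
    (hKc : IsCompact K) (hKne : K.Nonempty) (hKself : K = ⋃ i, F p i '' K)
    (g : E d ≃ᵢ E d) (σ : Fin (d+1) → Fin (d+1))
    (hgp : ∀ j, g (p j) = p (σ j)) (hg0 : g '' (F p 0 '' K) = F p 0 '' K) :
    σ 0 = 0 := by
  have hH := K_sub_hull hKc hKne hKself
  have hp0 : p 0 ∈ F p 0 '' K :=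
    ⟨p 0, pmem hKc hKne hKself 0, midpoint_self ℝ (p 0)⟩
  have hmem : g (p 0) ∈ F p 0 '' K := hg0 ▸ Set.mem_image_of_mem g hp0
  rw [hgp 0] at hmem
  obtain ⟨y, hyK, hy⟩ := hmem
  by_contra hne
  have hdist : dist (p (σ 0)) (p 0) = 1 := hp _ _ hne
  have h2 : dist (p (σ 0)) (p 0) = dist y (p 0) / 2 := by
    rw [← hy]
    conv_lhs => rw [show p 0 = F p 0 (p 0) from (midpoint_self ℝ (p 0)).symm]
    exact dist_F p 0 y (p 0)
  have hle : dist y (p 0) ≤ 1 :=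
    dist_le_one_hull hp (hH hyK) (hH (pmem hKc hKne hKself 0))
  linarith

lemma exists_good (hd : 1 ≤ d) (hp : ∀ i j, i ≠ j → dist (p i) (p j) = 1)
    (R : Fin (d+1) → (E d ≃ᵢ E d)) (hR0 : ∀ x, R 0 x = x)
    (hRsym : ∀ i, (R i) '' K = K)
    (hRswap : ∀ i, i ≠ 0 → R i (p 0) = p i ∧ R i (p i) = p 0 ∧
      ∀ l, l ≠ 0 → l ≠ i → R i (p l) = p l)
    (σ : Equiv.Perm (Fin (d+1))) :
    ∃ g : E d ≃ᵢ E d, g '' K = K ∧ ∀ j, g (p j) = p (σ j) := by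
  have hswap0 : ∀ i : Fin (d+1), ∃ g : E d ≃ᵢ E d, g '' K = K ∧
      ∀ j, g (p j) = p (Equiv.swap 0 i j) := by
    intro i
    rcases eq_or_ne i 0 with rfl | hi0
    · exact ⟨R 0, hRsym 0, fun j => by simp [hR0, Equiv.swap_self]⟩
    · refine ⟨R i, hRsym i, fun j => ?_⟩
      obtain ⟨h1, h2, h3⟩ := hRswap i hi0
      rcases eq_or_ne j 0 with rfl | hj0
      · rw [h1, Equiv.swap_apply_left]
      rcases eq_or_ne j i with rfl | hji
      · rw [h2, Equiv.swap_apply_right]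
      · rw [h3 j hj0 hji, Equiv.swap_apply_of_ne_of_ne hj0 hji]
  have hswap : ∀ x y : Fin (d+1), ∃ g : E d ≃ᵢ E d, g '' K = K ∧
      ∀ j, g (p j) = p (Equiv.swap x y j) := by
    intro x y
    rcases eq_or_ne x 0 with rfl | hx0
    · exact hswap0 y
    rcases eq_or_ne y 0 with rfl | hy0
    · obtain ⟨g, hg, hgp⟩ := hswap0 x
      exact ⟨g, hg, fun j => by rw [hgp, Equiv.swap_comm]⟩
    rcases eq_or_ne x y with rfl | hxy
    · exact ⟨R 0, hRsym 0, fun j => by simp [hR0, Equiv.swap_self]⟩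
    obtain ⟨g1, hg1, hg1p⟩ := hswap0 x
    obtain ⟨g2, hg2, hg2p⟩ := hswap0 y
    refine ⟨(g1.trans g2).trans g1, ?_, ?_⟩
    · rw [show ⇑((g1.trans g2).trans g1) = ⇑g1 ∘ ⇑g2 ∘ ⇑g1 from rfl]
      rw [Set.image_comp, Set.image_comp, hg1, hg2, hg1]
    · intro j
      have happ : ((g1.trans g2).trans g1) (p j) = g1 (g2 (g1 (p j))) := rfl
      rw [happ, hg1p, hg2p, hg1p]
      congr 1
      have hkey := Equiv.swap_apply_apply (Equiv.swap 0 x) 0 y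
      rw [Equiv.swap_apply_left, Equiv.swap_apply_of_ne_of_ne hy0 (Ne.symm hxy)] at hkey
      have := congrArg (fun e : Equiv.Perm (Fin (d+1)) => e j) hkey
      simp only [Equiv.Perm.mul_apply] at this
      rw [this, Equiv.swap_inv]
  refine Equiv.Perm.swap_induction_on σ ?_ ?_
  · exact ⟨R 0, hRsym 0, fun j => by simp [hR0]⟩
  · intro f x y hxy ih
    obtain ⟨gf, hgfK, hgfp⟩ := ih
    obtain ⟨gs, hgsK, hgsp⟩ := hswap x y
    refine ⟨gf.trans gs, ?_, fun j => ?_⟩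
    · rw [show ⇑(gf.trans gs) = ⇑gs ∘ ⇑gf from rfl, Set.image_comp, hgfK, hgsK]
    · rw [gf.trans_apply, hgfp, hgsp]
      rfl


lemma Fword_mem (hKself : K = ⋃ i, F p i '' K) (w : List (Fin (d+1))) {x : E d}
    (hx : x ∈ K) : Fword p w x ∈ K := by
  induction w with
  | nil => exact hx
  | cons i v ih => exact F_mapsTo hKself i ⟨Fword p v x, ih, rfl⟩

lemma cell_meas (hKc : IsCompact K) (w : List (Fin (d+1))) :
    MeasurableSet (Kcell p K w) :=
  ((hKc.image (Fword_cont p w)).isClosed).measurableSet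

def Sfin (d : ℕ) : Finset (Equiv.Perm (Fin (d+1))) :=
  Finset.univ.filter (fun σ => σ 0 = 0)

def orb (v : List (Fin (d+1))) : Finset (List (Fin (d+1))) :=
  (Sfin d).image (fun σ : Equiv.Perm (Fin (d+1)) => v.map ⇑σ)

lemma mem_orb {v u : List (Fin (d+1))} :
    u ∈ orb v ↔ ∃ σ : Equiv.Perm (Fin (d+1)), σ 0 = 0 ∧ v.map ⇑σ = u := by
  simp [orb, Sfin]

def Tfin (v : List (Fin (d+1))) : Finset (List (Fin (d+1))) :=
  Finset.univ.biUnion (fun i : Fin (d+1) => (orb v).image (fun u => i :: u.map (Equiv.swap 0 i)))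

lemma mem_Tfin {v x : List (Fin (d+1))} :
    x ∈ Tfin v ↔ ∃ (i : Fin (d+1)) (u : List (Fin (d+1))),
      u ∈ orb v ∧ x = i :: u.map (Equiv.swap 0 i) := by
  simp only [Tfin, Finset.mem_biUnion, Finset.mem_univ, true_and, Finset.mem_image]
  constructor
  · rintro ⟨i, u, hu, rfl⟩
    exact ⟨i, u, hu, rfl⟩
  · rintro ⟨i, u, hu, rfl⟩
    exact ⟨i, u, hu, rfl⟩

section Measure

variable (hd : 1 ≤ d) (hp : ∀ i j, i ≠ j → dist (p i) (p j) = 1)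
  (hKc : IsCompact K) (hKne : K.Nonempty) (hKself : K = ⋃ i, F p i '' K)
  (R : Fin (d+1) → (E d ≃ᵢ E d)) (hR0 : ∀ x, R 0 x = x)
  (hRsym : ∀ i, (R i) '' K = K)
  (hRswap : ∀ i, i ≠ 0 → R i (p 0) = p i ∧ R i (p i) = p 0 ∧
      ∀ l, l ≠ 0 → l ≠ i → R i (p l) = p l)
  (lam : Measure (E d))
  (hinv : ∀ g : E d ≃ᵢ E d, g '' K = K →
      ∀ B : Set (E d), MeasurableSet B → lam (g '' B) = lam B)

include hd hp hRsym hRswap hR0 hinv in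
lemma lam_cell_map (hKc : IsCompact K) (σ : Equiv.Perm (Fin (d+1))) (w : List (Fin (d+1))) :
    lam (Kcell p K (w.map σ)) = lam (Kcell p K w) := by
  obtain ⟨g, hgK, hgp⟩ := exists_good hd hp R hR0 hRsym hRswap σ
  rw [← g_cell g hgK σ hgp w]
  exact hinv g hgK _ (cell_meas hKc w)

include hd hp hRsym hRswap hR0 hinv in
lemma lam_pt_map (σ : Equiv.Perm (Fin (d+1))) (w : List (Fin (d+1))) (i : Fin (d+1)) :
    lam {Fword p (w.map σ) (p (σ i))} = lam {Fword p w (p i)} := by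
  obtain ⟨g, hgK, hgp⟩ := exists_good hd hp R hR0 hRsym hRswap σ
  have h : g '' {Fword p w (p i)} = {Fword p (w.map σ) (p (σ i))} := by
    rw [Set.image_singleton, g_Fword g σ hgp, hgp]
  rw [← h]
  exact hinv g hgK _ (measurableSet_singleton _)

include hp hKc hKne hKself in
lemma stab_perm (g : E d ≃ᵢ E d) (hgK : g '' K = K)
    (hg0 : g '' (F p 0 '' K) = F p 0 '' K) (hd : 1 ≤ d) :
    ∃ σ : Equiv.Perm (Fin (d+1)), σ 0 = 0 ∧ ∀ j, g (p j) = p (σ j) := by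
  obtain ⟨σ, hgp⟩ := symm_vertex hd hp hKc hKne hKself g hgK
  exact ⟨σ, sigma_zero hp hKc hKne hKself g σ hgp hg0, hgp⟩

include hd hp hKc hKne hKself hR0 hRsym hRswap hinv in
lemma vertex_null [IsProbabilityMeasure lam]
    (hss : ∀ B : Set (E d), MeasurableSet B → B ⊆ F p 0 '' K →
      (∀ g : E d ≃ᵢ E d, g '' K = K → g '' (F p 0 '' K) = F p 0 '' K →
        g '' B = B) →
      lam (F p 0 ⁻¹' B) = lam (⋃ i, R i '' B)) (i : Fin (d+1)) :
    lam {p i} = 0 := by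
  have hsame : ∀ i : Fin (d+1), lam {p i} = lam {p 0} := by
    intro i
    have := lam_pt_map hd hp R hR0 hRsym hRswap lam hinv (Equiv.swap 0 i) [] 0
    simpa [Fword_nil, Equiv.swap_apply_left] using this
  suffices h00 : lam {p 0} = 0 by rw [hsame i]; exact h00
  have hp0K : p 0 ∈ F p 0 '' K :=
    ⟨p 0, pmem hKc hKne hKself 0, midpoint_self ℝ (p 0)⟩
  have hRpt : ∀ i : Fin (d+1), R i '' {p 0} = {p i} := by
    intro i
    rcases eq_or_ne i 0 with rfl | hi0
    · rw [Set.image_singleton, hR0]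
    · rw [Set.image_singleton, (hRswap i hi0).1]
  have heq := hss {p 0} (measurableSet_singleton _) (Set.singleton_subset_iff.mpr hp0K) ?_
  swap
  · intro g hgK hg0
    obtain ⟨σ, hσ0, hgp⟩ := stab_perm hp hKc hKne hKself g hgK hg0 hd
    rw [Set.image_singleton, hgp 0, hσ0]
  have hL : F p 0 ⁻¹' {p 0} = {p 0} := by
    ext z
    simp only [Set.mem_preimage, Set.mem_singleton_iff]
    constructor
    · intro h
      exact F_inj p 0 (h.trans (midpoint_self ℝ (p 0)).symm)
    · rintro rfl
      exact midpoint_self ℝ (p 0)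
  have hdisj : Pairwise (Function.onFun Disjoint (fun i : Fin (d+1) => ({p i} : Set (E d)))) := by
    intro a b hab
    simp only [Function.onFun, Set.disjoint_singleton]
    exact fun h => hab (pinj hp h)
  have hR : lam (⋃ i, R i '' ({p 0} : Set (E d))) = ((d:ENNReal)+1) * lam {p 0} := by
    have h1 : (⋃ i, R i '' ({p 0} : Set (E d))) = ⋃ i : Fin (d+1), ({p i} : Set (E d)) :=
      Set.iUnion_congr hRpt
    rw [h1, measure_iUnion hdisj (fun i => measurableSet_singleton _), tsum_fintype,
      Finset.sum_congr rfl (fun i _ => hsame i), Finset.sum_const]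
    simp only [Finset.card_univ, Fintype.card_fin, nsmul_eq_mul]
    congr 1
    push_cast
    ring
  rw [hL, hR] at heq
  by_contra h0
  have hfin : lam {p 0} ≠ ⊤ := measure_ne_top lam _
  have hlt : lam {p 0} < ((d:ENNReal)+1) * lam {p 0} := by
    calc lam {p 0} < lam {p 0} + lam {p 0} := ENNReal.lt_add_right hfin h0
      _ = 2 * lam {p 0} := (two_mul _).symm
      _ ≤ ((d:ENNReal)+1) * lam {p 0} := by
          apply mul_le_mul_left
          have h2 : (2:ENNReal) = (1:ENNReal) + 1 := by norm_num
          rw [h2]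
          exact add_le_add_left (by exact_mod_cast hd) 1
  rw [← heq] at hlt
  exact lt_irrefl _ hlt

include hd hp hKc hKne hKself hR0 hRsym hRswap hinv in
lemma dyadic_null [IsProbabilityMeasure lam]
    (hss : ∀ B : Set (E d), MeasurableSet B → B ⊆ F p 0 '' K →
      (∀ g : E d ≃ᵢ E d, g '' K = K → g '' (F p 0 '' K) = F p 0 '' K →
        g '' B = B) →
      lam (F p 0 ⁻¹' B) = lam (⋃ i, R i '' B)) :
    ∀ (u : List (Fin (d+1))) (i : Fin (d+1)), lam {Fword p u (p i)} = 0 := by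
  suffices h : ∀ (n : ℕ) (u : List (Fin (d+1))) (i : Fin (d+1)), u.length = n →
      lam {Fword p u (p i)} = 0 by
    exact fun u i => h u.length u i rfl
  intro n
  induction n with
  | zero =>
    intro u i hu
    rw [List.length_eq_zero_iff.mp hu]
    exact vertex_null hd hp hKc hKne hKself R hR0 hRsym hRswap lam hinv hss i
  | succ n ih =>
    have claim0 : ∀ (v : List (Fin (d+1))) (i : Fin (d+1)), v.length = n →
        lam {Fword p (0 :: v) (p i)} = 0 := by
      intro v i hv
      set B : Set (E d) := ⋃ (σ : Equiv.Perm (Fin (d+1))) (_ : σ 0 = 0),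
        ({Fword p (0 :: v.map σ) (p (σ i))} : Set (E d)) with hBdef
      have hmeas : MeasurableSet B :=
        MeasurableSet.iUnion fun σ => MeasurableSet.iUnion fun _ => measurableSet_singleton _
      have hptK : ∀ (w : List (Fin (d+1))) (a : Fin (d+1)),
          Fword p (0 :: w) (p a) ∈ F p 0 '' K :=
        fun w a => ⟨Fword p w (p a), Fword_mem hKself w (pmem hKc hKne hKself a), rfl⟩
      have hsub : B ⊆ F p 0 '' K := by
        intro x hx
        simp only [hBdef, Set.mem_iUnion, Set.mem_singleton_iff] at hx
        obtain ⟨σ, hσ, rfl⟩ := hx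
        exact hptK _ _
      have hinvB : ∀ g : E d ≃ᵢ E d, g '' K = K → g '' (F p 0 '' K) = F p 0 '' K →
          g '' B = B := by
        intro g hgK hg0
        obtain ⟨σg, hσg0, hgp⟩ := stab_perm hp hKc hKne hKself g hgK hg0 hd
        have himg : ∀ σ : Equiv.Perm (Fin (d+1)), σ 0 = 0 →
            g (Fword p (0 :: v.map σ) (p (σ i))) =
              Fword p (0 :: v.map (σg * σ)) (p ((σg * σ) i)) := by
          intro σ hσ
          rw [g_Fword g σg hgp, hgp]
          have h1 : (0 :: v.map σ).map σg = 0 :: v.map (σg * σ) := by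
            rw [List.map_cons, hσg0, List.map_map, ← Equiv.Perm.coe_mul]
          rw [h1]
          rfl
        apply Set.Subset.antisymm
        · rintro x ⟨y, hy, rfl⟩
          simp only [hBdef, Set.mem_iUnion, Set.mem_singleton_iff] at hy ⊢
          obtain ⟨σ, hσ, rfl⟩ := hy
          exact ⟨σg * σ, by rw [Equiv.Perm.mul_apply, hσ, hσg0], himg σ hσ⟩
        · intro x hx
          simp only [hBdef, Set.mem_iUnion, Set.mem_singleton_iff] at hx
          obtain ⟨σ, hσ, rfl⟩ := hx
          refine ⟨Fword p (0 :: v.map (σg⁻¹ * σ)) (p ((σg⁻¹ * σ) i)), ?_, ?_⟩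
          · simp only [hBdef, Set.mem_iUnion, Set.mem_singleton_iff]
            exact ⟨σg⁻¹ * σ, by rw [Equiv.Perm.mul_apply, hσ]; exact Equiv.Perm.inv_eq_iff_eq.mpr hσg0.symm, rfl⟩
          · rw [himg (σg⁻¹ * σ) (by rw [Equiv.Perm.mul_apply, hσ]; exact Equiv.Perm.inv_eq_iff_eq.mpr hσg0.symm)]
            rw [mul_inv_cancel_left]
      have heq := hss B hmeas hsub hinvB
      have hL : F p 0 ⁻¹' B = ⋃ (σ : Equiv.Perm (Fin (d+1))) (_ : σ 0 = 0),
          ({Fword p (v.map σ) (p (σ i))} : Set (E d)) := by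
        rw [hBdef, Set.preimage_iUnion]
        apply Set.iUnion_congr
        intro σ
        rw [Set.preimage_iUnion]
        apply Set.iUnion_congr
        intro hσ
        ext z
        simp only [Set.mem_preimage, Set.mem_singleton_iff]
        constructor
        · intro h
          exact F_inj p 0 h
        · rintro rfl
          rfl
      have hLnull : lam (F p 0 ⁻¹' B) = 0 := by
        rw [hL]
        apply measure_iUnion_null
        intro σ
        apply measure_iUnion_null
        intro hσ
        exact ih (v.map σ) (σ i) (by rw [List.length_map, hv])
      have hmem : Fword p (0 :: v) (p i) ∈ ⋃ j, R j '' B := by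
        have hinB : Fword p (0 :: v) (p i) ∈ B := by
          simp only [hBdef, Set.mem_iUnion, Set.mem_singleton_iff]
          refine ⟨1, rfl, ?_⟩
          simp [Equiv.Perm.coe_one]
        refine Set.mem_iUnion.mpr ⟨0, ?_⟩
        have hR0id : ⇑(R 0) = id := funext hR0
        rw [hR0id, Set.image_id]
        exact hinB
      have hle : lam {Fword p (0 :: v) (p i)} ≤ lam (⋃ j, R j '' B) :=
        measure_mono (Set.singleton_subset_iff.mpr hmem)
      rw [← heq, hLnull] at hle
      exact le_antisymm hle zero_le
    intro u i hu
    obtain ⟨j, v, rfl⟩ : ∃ j v, u = j :: v := by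
      cases u with
      | nil => simp at hu
      | cons a b => exact ⟨a, b, rfl⟩
    have hlen : v.length = n := by simpa using hu
    have hmap := lam_pt_map hd hp R hR0 hRsym hRswap lam hinv (Equiv.swap 0 j) (j :: v) i
    rw [← hmap]
    have h1 : (j :: v).map (Equiv.swap 0 j) = 0 :: v.map (Equiv.swap 0 j) := by
      rw [List.map_cons, Equiv.swap_apply_right]
    rw [h1]
    exact claim0 _ _ (by rw [List.length_map, hlen])

lemma cell_cons (a : Fin (d+1)) (z : List (Fin (d+1))) :
    Kcell p K (a :: z) = F p a '' Kcell p K z := by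
  show (F p a ∘ Fword p z) '' K = F p a '' (Fword p z '' K)
  rw [Set.image_comp]

include hp hKc hKne hKself in
lemma cell_inter_sub :
    ∀ (w w' : List (Fin (d+1))), w.length = w'.length → w ≠ w' →
    ∃ (u : List (Fin (d+1))) (j : Fin (d+1)),
      Kcell p K w ∩ Kcell p K w' ⊆ {Fword p u (p j)} := by
  have hcell := cell_cons (p := p) (K := K)
  intro w
  induction w with
  | nil =>
    intro w' hlen hne
    exfalso
    exact hne (List.length_eq_zero_iff.mp hlen.symm).symm
  | cons a v ihv =>
    intro w' hlen hne
    obtain ⟨b, v', rfl⟩ : ∃ b v', w' = b :: v' := by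
      cases w' with
      | nil => simp at hlen
      | cons x y => exact ⟨x, y, rfl⟩
    rcases eq_or_ne a b with rfl | hab
    · have hne' : v ≠ v' := fun h => hne (by rw [h])
      obtain ⟨u, j, hsub⟩ := ihv v' (by simpa using hlen) hne'
      refine ⟨a :: u, j, ?_⟩
      rw [hcell a v, hcell a v', ← Set.image_inter (F_inj p a)]
      rintro x ⟨y, hy, rfl⟩
      have hy2 : y = Fword p u (p j) := hsub hy
      rw [hy2]
      rfl
    · refine ⟨[a], b, ?_⟩
      intro x hx
      have hKcellK : ∀ z, Kcell p K z ⊆ K := by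
        rintro z x ⟨y, hy, rfl⟩
        exact Fword_mem hKself z hy
      have hx1 := hx.1
      have hx2 := hx.2
      rw [hcell a v] at hx1
      rw [hcell b v'] at hx2
      have hxa : x ∈ F p a '' K := Set.image_mono (hKcellK v) hx1
      have hxb : x ∈ F p b '' K := Set.image_mono (hKcellK v') hx2
      have hmid := level1_inter hp hKc hKne hKself hab ⟨hxa, hxb⟩
      rw [Set.mem_singleton_iff, hmid]
      rfl

include hR0 hRswap in
lemma Rswap_pt : ∀ (i j : Fin (d+1)), R i (p j) = p (Equiv.swap 0 i j) := by
  intro i j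
  rcases eq_or_ne i 0 with rfl | hi0
  · simp [hR0, Equiv.swap_self]
  obtain ⟨h1, h2, h3⟩ := hRswap i hi0
  rcases eq_or_ne j 0 with rfl | hj0
  · rw [h1, Equiv.swap_apply_left]
  rcases eq_or_ne j i with rfl | hji
  · rw [h2, Equiv.swap_apply_right]
  · rw [h3 j hj0 hji, Equiv.swap_apply_of_ne_of_ne hj0 hji]

include hd hp hKc hKne hKself hR0 hRsym hRswap hinv in
lemma key_lemma [IsProbabilityMeasure lam]
    (hss : ∀ B : Set (E d), MeasurableSet B → B ⊆ F p 0 '' K →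
      (∀ g : E d ≃ᵢ E d, g '' K = K → g '' (F p 0 '' K) = F p 0 '' K →
        g '' B = B) →
      lam (F p 0 ⁻¹' B) = lam (⋃ i, R i '' B)) (v : List (Fin (d+1))) :
    lam (Kcell p K (0 :: v)) = ((d:ENNReal)+1)⁻¹ * lam (Kcell p K v) := by
  classical
  have hdyadic := dyadic_null hd hp hKc hKne hKself R hR0 hRsym hRswap lam hinv hss
  have haedisj : ∀ w w', w.length = w'.length → w ≠ w' →
      AEDisjoint lam (Kcell p K w) (Kcell p K w') := by
    intro w w' hl hne
    obtain ⟨u, j, hsub⟩ := cell_inter_sub hp hKc hKne hKself w w' hl hne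
    exact le_antisymm ((measure_mono hsub).trans (le_of_eq (hdyadic u j))) zero_le
  have horb_len : ∀ u ∈ orb v, u.length = v.length := by
    intro u hu
    obtain ⟨σ, -, rfl⟩ := mem_orb.mp hu
    exact List.length_map _
  have hvorb : v ∈ orb v := mem_orb.mpr ⟨1, rfl, by simp⟩
  set A : Set (E d) := ⋃ u ∈ orb v, Kcell p K (0 :: u) with hA
  have hmeasA : MeasurableSet A :=
    Finset.measurableSet_biUnion _ (fun u _ => cell_meas hKc _)
  have hsubA : A ⊆ F p 0 '' K := by
    intro x hx
    rw [hA, Set.mem_iUnion₂] at hx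
    obtain ⟨u, hu, hx⟩ := hx
    rw [cell_cons] at hx
    obtain ⟨y, hy, rfl⟩ := hx
    obtain ⟨z, hz, rfl⟩ := hy
    exact ⟨Fword p u z, Fword_mem hKself u hz, rfl⟩
  have hinvA : ∀ g : E d ≃ᵢ E d, g '' K = K → g '' (F p 0 '' K) = F p 0 '' K →
      g '' A = A := by
    intro g hgK hg0
    obtain ⟨σg, hσg0, hgp⟩ := stab_perm hp hKc hKne hKself g hgK hg0 hd
    have hmap : ∀ τ' : Equiv.Perm (Fin (d+1)), τ' 0 = 0 → ∀ u ∈ orb v, u.map ⇑τ' ∈ orb v := by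
      intro τ' hτ' u hu
      obtain ⟨σ, hσ0, rfl⟩ := mem_orb.mp hu
      rw [List.map_map, ← Equiv.Perm.coe_mul]
      exact mem_orb.mpr ⟨τ' * σ, by rw [Equiv.Perm.mul_apply, hσ0, hτ'], rfl⟩
    have himg : ∀ u, g '' Kcell p K (0 :: u) = Kcell p K (0 :: u.map ⇑σg) := by
      intro u
      rw [g_cell g hgK σg hgp, List.map_cons, hσg0]
    have hinv0 : σg⁻¹ 0 = 0 := Equiv.Perm.inv_eq_iff_eq.mpr hσg0.symm
    rw [hA, Set.image_iUnion₂]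
    apply Set.Subset.antisymm
    · refine Set.iUnion₂_subset fun u hu => ?_
      rw [himg u]
      exact Set.subset_iUnion₂ (s := fun u' _ => Kcell p K (0 :: u'))
        (u.map ⇑σg) (hmap σg hσg0 u hu)
    · refine Set.iUnion₂_subset fun u hu => ?_
      have hrec : (u.map ⇑σg⁻¹).map ⇑σg = u := by
        rw [List.map_map, ← Equiv.Perm.coe_mul, mul_inv_cancel]
        simp
      have humem : u.map ⇑σg⁻¹ ∈ orb v := hmap σg⁻¹ hinv0 u hu
      have hsub2 : Kcell p K (0 :: u) = g '' Kcell p K (0 :: u.map ⇑σg⁻¹) := by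
        rw [himg, hrec]
      rw [hsub2]
      exact Set.subset_iUnion₂ (s := fun u' _ => g '' Kcell p K (0 :: u'))
        (u.map ⇑σg⁻¹) humem
  have heq := hss A hmeasA hsubA hinvA
  have hpre : F p 0 ⁻¹' A = ⋃ u ∈ orb v, Kcell p K u := by
    rw [hA, Set.preimage_iUnion]
    apply Set.iUnion_congr
    intro u
    rw [Set.preimage_iUnion]
    apply Set.iUnion_congr
    intro hu
    rw [cell_cons, Set.preimage_image_eq _ (F_inj p 0)]
  have hpair : (↑(orb v) : Set (List (Fin (d+1)))).Pairwise
      (Function.onFun (AEDisjoint lam) (fun u => Kcell p K u)) := by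
    intro u hu u' hu' hne
    exact haedisj u u' (by
      rw [horb_len u (Finset.mem_coe.mp hu), horb_len u' (Finset.mem_coe.mp hu')]) hne
  have hLHS : lam (F p 0 ⁻¹' A) = ((orb v).card : ENNReal) * lam (Kcell p K v) := by
    have hsum : ∀ u ∈ orb v, lam (Kcell p K u) = lam (Kcell p K v) := by
      intro u hu
      obtain ⟨σ, -, rfl⟩ := mem_orb.mp hu
      exact lam_cell_map hd hp R hR0 hRsym hRswap lam hinv hKc σ v
    rw [hpre, measure_biUnion_finset₀ hpair (fun u _ => (cell_meas hKc u).nullMeasurableSet),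
      Finset.sum_congr rfl hsum, Finset.sum_const, nsmul_eq_mul]
  have hRpt := Rswap_pt R hR0 hRswap
  have hRcell : ∀ (i : Fin (d+1)) (w : List (Fin (d+1))),
      R i '' Kcell p K w = Kcell p K (w.map (Equiv.swap 0 i)) :=
    fun i w => g_cell (R i) (hRsym i) _ (hRpt i) w
  have hunion : (⋃ i, R i '' A) = ⋃ x ∈ Tfin v, Kcell p K x := by
    ext z
    simp only [Set.mem_iUnion]
    constructor
    · rintro ⟨i, hz⟩
      rw [hA, Set.image_iUnion₂] at hz
      rw [Set.mem_iUnion₂] at hz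
      obtain ⟨u, hu, hz⟩ := hz
      rw [hRcell i (0::u), List.map_cons, Equiv.swap_apply_left] at hz
      exact ⟨i :: u.map (Equiv.swap 0 i), mem_Tfin.mpr ⟨i, u, hu, rfl⟩, hz⟩
    · rintro ⟨x, hxT, hz⟩
      obtain ⟨i, u, hu, rfl⟩ := mem_Tfin.mp hxT
      refine ⟨i, ?_⟩
      rw [hA, Set.image_iUnion₂, Set.mem_iUnion₂]
      refine ⟨u, hu, ?_⟩
      rw [hRcell i (0::u), List.map_cons, Equiv.swap_apply_left]
      exact hz
  have hTlen : ∀ x ∈ Tfin v, x.length = v.length + 1 := by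
    intro x hx
    obtain ⟨i, u, hu, rfl⟩ := mem_Tfin.mp hx
    simp [horb_len u hu]
  have hTmass : ∀ x ∈ Tfin v, lam (Kcell p K x) = lam (Kcell p K (0 :: v)) := by
    intro x hx
    obtain ⟨i, u, hu, rfl⟩ := mem_Tfin.mp hx
    obtain ⟨σ, hσ0, rfl⟩ := mem_orb.mp hu
    have hid : (⇑(Equiv.swap 0 i) ∘ ⇑(Equiv.swap 0 i)) = id :=
      funext fun a => Equiv.swap_apply_self 0 i a
    have h1 : (i :: ((v.map ⇑σ).map (Equiv.swap 0 i))).map (Equiv.swap 0 i) = (0::v).map ⇑σ := by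
      rw [List.map_cons, Equiv.swap_apply_right, List.map_map, hid, List.map_id,
        List.map_cons, hσ0]
    calc lam (Kcell p K (i :: (v.map ⇑σ).map (Equiv.swap 0 i)))
        = lam (Kcell p K ((i :: (v.map ⇑σ).map (Equiv.swap 0 i)).map (Equiv.swap 0 i))) :=
          (lam_cell_map hd hp R hR0 hRsym hRswap lam hinv hKc (Equiv.swap 0 i) _).symm
      _ = lam (Kcell p K ((0::v).map ⇑σ)) := by rw [h1]
      _ = lam (Kcell p K (0::v)) :=
          lam_cell_map hd hp R hR0 hRsym hRswap lam hinv hKc σ (0::v)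
  have hpairT : (↑(Tfin v) : Set (List (Fin (d+1)))).Pairwise
      (Function.onFun (AEDisjoint lam) (fun u => Kcell p K u)) := by
    intro x hx x' hx' hne
    exact haedisj x x' (by
      rw [hTlen x (Finset.mem_coe.mp hx), hTlen x' (Finset.mem_coe.mp hx')]) hne
  have hRHS : lam (⋃ i, R i '' A) = ((Tfin v).card : ENNReal) * lam (Kcell p K (0 :: v)) := by
    rw [hunion, measure_biUnion_finset₀ hpairT (fun u _ => (cell_meas hKc u).nullMeasurableSet),
      Finset.sum_congr rfl hTmass, Finset.sum_const, nsmul_eq_mul]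
  have hTcard : (Tfin v).card = (d+1) * (orb v).card := by
    rw [Tfin, Finset.card_biUnion]
    · have hc : ∀ i ∈ Finset.univ, ((orb v).image
          (fun u => i :: u.map (Equiv.swap 0 i))).card = (orb v).card := by
        intro i _
        apply Finset.card_image_of_injective
        intro a b h
        have h2 := List.tail_eq_of_cons_eq h
        exact List.map_injective_iff.mpr (Equiv.injective _) h2
      rw [Finset.sum_congr rfl hc, Finset.sum_const, Finset.card_univ, Fintype.card_fin,
        smul_eq_mul]
    · intro i _ i' _ hii
      simp only [Finset.disjoint_left]
      rintro x hx hx'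
      obtain ⟨u, -, rfl⟩ := Finset.mem_image.mp hx
      obtain ⟨u', -, h⟩ := Finset.mem_image.mp hx'
      exact hii (List.head_eq_of_cons_eq h).symm
  have hc0 : ((orb v).card : ENNReal) ≠ 0 := by
    simp only [ne_eq, Nat.cast_eq_zero]
    exact Finset.card_ne_zero_of_mem hvorb
  have hcT : ((Tfin v).card : ENNReal) = ((d:ENNReal)+1) * ((orb v).card : ENNReal) := by
    rw [hTcard]
    push_cast
    ring
  rw [hLHS, hRHS, hcT] at heq
  have heq2 : ((orb v).card : ENNReal) * lam (Kcell p K v)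
      = ((orb v).card : ENNReal) * (((d:ENNReal)+1) * lam (Kcell p K (0::v))) := by
    rw [heq]
    ring
  have hXY := (ENNReal.mul_right_inj hc0 (ENNReal.natCast_ne_top _)).mp heq2
  rw [hXY, ← mul_assoc, ENNReal.inv_mul_cancel ?_ ?_, one_mul]
  · intro h
    have hle1 : (1:ENNReal) ≤ (d:ENNReal) + 1 := le_add_self
    rw [h] at hle1
    simp at hle1
  · exact ENNReal.add_ne_top.mpr ⟨ENNReal.natCast_ne_top _, ENNReal.one_ne_top⟩

include hd hp hKc hKne hKself hR0 hRsym hRswap hinv in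
lemma cell_mass [IsProbabilityMeasure lam] (hlamK : lam K = 1)
    (hss : ∀ B : Set (E d), MeasurableSet B → B ⊆ F p 0 '' K →
      (∀ g : E d ≃ᵢ E d, g '' K = K → g '' (F p 0 '' K) = F p 0 '' K →
        g '' B = B) →
      lam (F p 0 ⁻¹' B) = lam (⋃ i, R i '' B)) (w : List (Fin (d+1))) :
    lam (Kcell p K w) = (((d:ENNReal)+1)⁻¹) ^ w.length := by
  induction w with
  | nil =>
    have h : Kcell p K [] = K := Set.image_id K
    rw [h, hlamK, List.length_nil, pow_zero]
  | cons j v ih =>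
    have h1 := lam_cell_map hd hp R hR0 hRsym hRswap lam hinv hKc (Equiv.swap 0 j) (j :: v)
    have h2 : (j :: v).map (Equiv.swap 0 j) = 0 :: v.map (Equiv.swap 0 j) := by
      rw [List.map_cons, Equiv.swap_apply_right]
    rw [h2] at h1
    have h3 := key_lemma hd hp hKc hKne hKself R hR0 hRsym hRswap lam hinv hss
      (v.map (Equiv.swap 0 j))
    have h4 := lam_cell_map hd hp R hR0 hRsym hRswap lam hinv hKc (Equiv.swap 0 j) v
    rw [← h1, h3, h4, ih, List.length_cons, pow_succ]
    ring

end Measure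

end Aux16

/-- A symmetry-invariant Borel probability measure satisfying the self-similar
identity gives equal mass to all level-n cells and has no atoms at the dyadic
points `p_x = F_{i₁…i_{n-1}}(p_{iₙ})`. -/
theorem stmt16 (hd : 1 ≤ d) (p : Fin (d+1) → E d)
    (hp : ∀ i j, i ≠ j → dist (p i) (p j) = 1)
    (K : Set (E d)) (hKc : IsCompact K) (hKne : K.Nonempty)
    (hKself : K = ⋃ i, F p i '' K)
    (R : Fin (d+1) → (E d ≃ᵢ E d)) (hR0 : ∀ x, R 0 x = x)
    (hRsym : ∀ i, (R i) '' K = K)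
    (hRswap : ∀ i, i ≠ 0 → R i (p 0) = p i ∧ R i (p i) = p 0 ∧
      ∀ l, l ≠ 0 → l ≠ i → R i (p l) = p l)
    (lam : Measure (E d)) [IsProbabilityMeasure lam] (hlamK : lam K = 1)
    (hinv : ∀ g : E d ≃ᵢ E d, g '' K = K →
      ∀ B : Set (E d), MeasurableSet B → lam (g '' B) = lam B)
    (hss : ∀ B : Set (E d), MeasurableSet B → B ⊆ F p 0 '' K →
      (∀ g : E d ≃ᵢ E d, g '' K = K → g '' (F p 0 '' K) = F p 0 '' K →
        g '' B = B) →
      lam (F p 0 ⁻¹' B) = lam (⋃ i, R i '' B)) :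
    (∀ w w' : List (Fin (d+1)), w.length = w'.length →
      lam (Kcell p K w) = lam (Kcell p K w')) ∧
    (∀ (u : List (Fin (d+1))) (i : Fin (d+1)), lam {Fword p u (p i)} = 0) := by
  constructor
  · intro w w' hlen
    rw [Aux16.cell_mass hd hp hKc hKne hKself R hR0 hRsym hRswap lam hinv hlamK hss w,
      Aux16.cell_mass hd hp hKc hKne hKself R hR0 hRsym hRswap lam hinv hlamK hss w', hlen]
  · exact Aux16.dyadic_null hd hp hKc hKne hKself R hR0 hRsym hRswap lam hinv hss
end
end
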